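/- arXiv:1009.5543 — 6 statements merged into one kernel-verified Lean document; each statement's English description precedes it below -/
import Mathlib

section
/- Let F be an algebraically closed field and n ≥ 3. For any two non-scalar matrices A, B ∈ M_n(F), there exist non-scalar matrices R₁, R₂, R₃ such that A commutes with R₁, R₁ commutes with R₂, R₂ commutes with R₃, and R₃ commutes with B. Hence the distance between any two vertices in the commuting graph Γ(M_n(F)) is at most four. -/
open Matrix

/-- A matrix is scalar if it is a scalar multiple of the identity. -/
def IsScalarM {F : Type*} [Field F] {n : ℕ} (A : Matrix (Fin n) (Fin n) F) : Prop :=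
  ∃ c : F, A = c • (1 : Matrix (Fin n) (Fin n) F)

/-- The commuting graph of `M_n(F)`: vertices are the non-scalar matrices, with an
edge between two distinct matrices whenever they commute. -/
def CommGraph (F : Type*) [Field F] (n : ℕ) :
    SimpleGraph {A : Matrix (Fin n) (Fin n) F // ¬ IsScalarM A} where
  Adj X Y := X ≠ Y ∧ X.1 * Y.1 = Y.1 * X.1
  symm := ⟨fun X Y h => ⟨h.1.symm, h.2.symm⟩⟩
  loopless := ⟨fun X h => h.1 rfl⟩

/-- The `k × k` nilpotent upper-triangular Jordan block. -/
def Jblock (F : Type*) [Field F] (k : ℕ) : Matrix (Fin k) (Fin k) F :=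
  Matrix.of fun i j => if (i : ℕ) + 1 = (j : ℕ) then 1 else 0

section Aux

variable {F : Type*} [Field F] {n : ℕ}

/-- A rank-one matrix `v uᵀ` with `v, u ≠ 0` is non-scalar when `n ≥ 2`. -/
lemma vecMulVec_not_scalar (hn : 2 ≤ n) {v u : Fin n → F} (hv : v ≠ 0) (hu : u ≠ 0) :
    ¬ IsScalarM (vecMulVec v u) := by
  rintro ⟨c, hc⟩
  obtain ⟨i, hi⟩ := Function.ne_iff.mp hv
  obtain ⟨j, hj⟩ := Function.ne_iff.mp hu
  simp only [Pi.zero_apply] at hi hj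
  have key : ∀ a b, v a * u b = c * (if a = b then 1 else 0) := by
    intro a b
    have := congrFun (congrFun hc a) b
    simpa [vecMulVec_apply, Matrix.one_apply, Matrix.smul_apply] using this
  have hij : i = j := by
    by_contra h
    have := key i j
    simp [h] at this
    rcases this with h' | h'
    · exact hi h'
    · exact hj h'
  subst hij
  have hc0 : c ≠ 0 := by
    have := key i i
    simp at this
    rw [← this]
    exact mul_ne_zero hi hj
  obtain ⟨k, hk⟩ : ∃ k : Fin n, k ≠ i :=
    Fintype.exists_ne_of_one_lt_card (by simp; omega) i
  have h1 : v k * u i = 0 := by have := key k i; simpa [hk] using this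
  have hvk : v k = 0 := by
    rcases mul_eq_zero.mp h1 with h | h
    · exact h
    · exact absurd h hj
  have := key k k
  rw [hvk] at this
  simp at this
  exact hc0 this.symm

/-- Every matrix over an algebraically closed field (n ≥ 1) has a common eigenvalue with
right eigenvector `v` and left eigenvector `u`. -/
lemma exists_left_right_eigen (hn : 1 ≤ n) (A : Matrix (Fin n) (Fin n) F) [IsAlgClosed F] :
    ∃ (μ : F) (v u : Fin n → F), v ≠ 0 ∧ u ≠ 0 ∧
      A *ᵥ v = μ • v ∧ u ᵥ* A = μ • u := by
  haveI : NeZero n := ⟨by omega⟩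
  obtain ⟨μ, hμ⟩ := Module.End.exists_eigenvalue (Matrix.mulVecLin A)
  obtain ⟨v, hv⟩ := hμ.exists_hasEigenvector
  have hv0 : v ≠ 0 := hv.2
  have hAv : A *ᵥ v = μ • v := by
    have := hv.apply_eq_smul
    simpa [Matrix.mulVecLin_apply] using this
  have hdet : (A - μ • 1).det = 0 := by
    rw [← Matrix.exists_mulVec_eq_zero_iff]
    refine ⟨v, hv0, ?_⟩
    simp [Matrix.sub_mulVec, hAv, Matrix.smul_mulVec]
  obtain ⟨u, hu0, huA⟩ := Matrix.exists_vecMul_eq_zero_iff.mpr hdet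
  refine ⟨μ, v, u, hv0, hu0, hAv, ?_⟩
  have h0 : u ᵥ* A - u ᵥ* (μ • 1) = 0 := by rw [← Matrix.vecMul_sub]; exact huA
  have h2 : u ᵥ* (μ • 1) = μ • u := by
    ext j
    simp [Matrix.vecMul, dotProduct, Matrix.smul_apply, Matrix.one_apply, mul_comm]
  rw [h2] at h0
  exact sub_eq_zero.mp h0

/-- Given two covectors in dimension ≥ 3, there is a nonzero vector orthogonal to both. -/
lemma exists_common_kernel (hn : 3 ≤ n) (u u' : Fin n → F) :
    ∃ w : Fin n → F, w ≠ 0 ∧ u ⬝ᵥ w = 0 ∧ u' ⬝ᵥ w = 0 := by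
  let f : (Fin n → F) →ₗ[F] F × F :=
    { toFun := fun w => (u ⬝ᵥ w, u' ⬝ᵥ w)
      map_add' := by intro x y; simp [dotProduct_add]
      map_smul' := by intro c x; simp [dotProduct_smul] }
  have hnotinj : ¬ Function.Injective f := by
    intro hinj
    have := LinearMap.finrank_le_finrank_of_injective hinj
    simp [Module.finrank_prod] at this
    omega
  obtain ⟨x, y, hxy, hne⟩ := Function.not_injective_iff.mp hnotinj
  have hz : f (x - y) = 0 := by rw [map_sub, hxy, sub_self]
  refine ⟨x - y, sub_ne_zero.mpr hne, ?_, ?_⟩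
  · simpa [f] using congrArg Prod.fst hz
  · simpa [f] using congrArg Prod.snd hz

lemma mul_vecMulVec_comm {A : Matrix (Fin n) (Fin n) F} {μ : F} {v u : Fin n → F}
    (hv : A *ᵥ v = μ • v) (hu : u ᵥ* A = μ • u) :
    A * vecMulVec v u = vecMulVec v u * A := by
  ext i j
  have h1 : (A * vecMulVec v u) i j = (A *ᵥ v) i * u j := by
    simp [Matrix.mul_apply, vecMulVec_apply, Matrix.mulVec, dotProduct, Finset.sum_mul, mul_assoc]
  have h2 : (vecMulVec v u * A) i j = v i * (u ᵥ* A) j := by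
    simp [Matrix.mul_apply, vecMulVec_apply, Matrix.vecMul, dotProduct, Finset.mul_sum, mul_assoc]
  rw [h1, h2, hv, hu]
  simp [mul_assoc, mul_comm, mul_left_comm]

lemma vecMulVec_mul_vecMulVec (v u w z : Fin n → F) :
    vecMulVec v u * vecMulVec w z = (u ⬝ᵥ w) • vecMulVec v z := by
  ext i j
  simp [Matrix.mul_apply, vecMulVec_apply, dotProduct, Finset.sum_mul, Finset.mul_sum]
  ring_nf
  apply Finset.sum_congr rfl
  intro k _
  ring

/-- From a commuting pair of vertices we get a walk of length at most 1. -/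
lemma walk_of_comm (X Y : {A : Matrix (Fin n) (Fin n) F // ¬ IsScalarM A})
    (h : X.1 * Y.1 = Y.1 * X.1) :
    ∃ w : (CommGraph F n).Walk X Y, w.length ≤ 1 := by
  by_cases hXY : X = Y
  · subst hXY; exact ⟨SimpleGraph.Walk.nil, by simp⟩
  · exact ⟨SimpleGraph.Walk.cons (show (CommGraph F n).Adj X Y from ⟨hXY, h⟩) SimpleGraph.Walk.nil, by simp⟩

end Aux

theorem stmt2 (F : Type*) [Field F] [IsAlgClosed F] (n : ℕ) (hn : 3 ≤ n)
    (A B : Matrix (Fin n) (Fin n) F) (hA : ¬ IsScalarM A) (hB : ¬ IsScalarM B) :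
    (∃ R₁ R₂ R₃ : Matrix (Fin n) (Fin n) F,
      ¬ IsScalarM R₁ ∧ ¬ IsScalarM R₂ ∧ ¬ IsScalarM R₃ ∧
      A * R₁ = R₁ * A ∧ R₁ * R₂ = R₂ * R₁ ∧ R₂ * R₃ = R₃ * R₂ ∧ R₃ * B = B * R₃) ∧
    (CommGraph F n).dist ⟨A, hA⟩ ⟨B, hB⟩ ≤ 4 := by
  obtain ⟨μ, v, u, hv0, hu0, hAv, huA⟩ := exists_left_right_eigen (by omega) A
  obtain ⟨ν, v', u', hv'0, hu'0, hBv, huB⟩ := exists_left_right_eigen (by omega) B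
  obtain ⟨w, hw0, hw1, hw2⟩ := exists_common_kernel hn u u'
  obtain ⟨z, hz0, hz1, hz2⟩ := exists_common_kernel hn (fun i => v i) (fun i => v' i)
  set R₁ := vecMulVec v u with hR₁
  set R₂ := vecMulVec w z with hR₂
  set R₃ := vecMulVec v' u' with hR₃
  have hNS₁ : ¬ IsScalarM R₁ := vecMulVec_not_scalar (by omega) hv0 hu0
  have hNS₂ : ¬ IsScalarM R₂ := vecMulVec_not_scalar (by omega) hw0 hz0
  have hNS₃ : ¬ IsScalarM R₃ := vecMulVec_not_scalar (by omega) hv'0 hu'0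
  have hc1 : A * R₁ = R₁ * A := mul_vecMulVec_comm hAv huA
  have hzv : z ⬝ᵥ v = 0 := by
    have : (fun i => v i) ⬝ᵥ z = 0 := hz1
    rw [dotProduct_comm] at this; exact this
  have hzv' : z ⬝ᵥ v' = 0 := by
    have : (fun i => v' i) ⬝ᵥ z = 0 := hz2
    rw [dotProduct_comm] at this; exact this
  have hc2 : R₁ * R₂ = R₂ * R₁ := by
    rw [hR₁, hR₂, _root_.vecMulVec_mul_vecMulVec, _root_.vecMulVec_mul_vecMulVec, hw1, hzv]
    simp
  have hc3 : R₂ * R₃ = R₃ * R₂ := by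
    rw [hR₂, hR₃, _root_.vecMulVec_mul_vecMulVec, _root_.vecMulVec_mul_vecMulVec, hzv', hw2]
    simp
  have hc4 : R₃ * B = B * R₃ := (mul_vecMulVec_comm hBv huB).symm
  refine ⟨⟨R₁, R₂, R₃, hNS₁, hNS₂, hNS₃, hc1, hc2, hc3, hc4⟩, ?_⟩
  obtain ⟨w1, hw1'⟩ := walk_of_comm ⟨A, hA⟩ ⟨R₁, hNS₁⟩ hc1
  obtain ⟨w2, hw2'⟩ := walk_of_comm ⟨R₁, hNS₁⟩ ⟨R₂, hNS₂⟩ hc2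
  obtain ⟨w3, hw3'⟩ := walk_of_comm ⟨R₂, hNS₂⟩ ⟨R₃, hNS₃⟩ hc3
  obtain ⟨w4, hw4'⟩ := walk_of_comm ⟨R₃, hNS₃⟩ ⟨B, hB⟩ hc4
  calc (CommGraph F n).dist ⟨A, hA⟩ ⟨B, hB⟩ ≤ (((w1.append w2).append w3).append w4).length :=
        SimpleGraph.dist_le _
    _ ≤ 4 := by simp [SimpleGraph.Walk.length_append]; omega
end

section
/- Let A = J_{k₁} ⊕ J_{k₂} ∈ M_{k₁+k₂}(F) be a nilpotent matrix which is a direct sum of two nilpotent Jordan cells of sizes k₁, k₂ ≥ 1. Then for every rank-one matrix R ∈ M_{k₁+k₂}(F) there exists a non-scalar matrix Z commuting with both A and R; in particular d(A, R) ≤ 2 in the commuting graph. -/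
open Matrix

/-- In the span of two standard basis vectors at distinct coordinates `u ≠ w`, with columns
`u`, `w` of `M` zero and `N` of rank `≤ 1`, there is a nonzero common kernel vector. -/
lemma key_ker {F : Type*} [Field F] {n : ℕ}
    (M N : Matrix (Fin n) (Fin n) F) (hN : N.rank ≤ 1)
    (u w : Fin n) (huw : u ≠ w)
    (hu : ∀ i, M i u = 0) (hw : ∀ i, M i w = 0) :
    ∃ p : Fin n → F, p ≠ 0 ∧ M *ᵥ p = 0 ∧ N *ᵥ p = 0 := by
  set S := LinearMap.range N.mulVecLin with hS
  have hc1 : N *ᵥ Pi.single u 1 ∈ S := ⟨Pi.single u 1, rfl⟩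
  have hc2 : N *ᵥ Pi.single w 1 ∈ S := ⟨Pi.single w 1, rfl⟩
  have hrank : Module.finrank F S ≤ 1 := hN
  have hdep : ¬ LinearIndependent F ![(⟨_, hc1⟩ : S), ⟨_, hc2⟩] := by
    intro h
    have := h.fintype_card_le_finrank
    simp at this
    omega
  rw [Fintype.not_linearIndependent_iff] at hdep
  obtain ⟨g, hg0, i, hgi⟩ := hdep
  refine ⟨g 0 • (Pi.single u 1 : Fin n → F) + g 1 • (Pi.single w 1 : Fin n → F), ?_, ?_, ?_⟩
  · intro hp
    fin_cases i
    · have := congrFun hp u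
      simp [Pi.single_eq_of_ne huw] at this
      exact hgi this
    · have := congrFun hp w
      simp [Pi.single_eq_of_ne huw.symm] at this
      exact hgi this
  · rw [mulVec_add, mulVec_smul, mulVec_smul, mulVec_single, mulVec_single]
    funext i
    simp [hu, hw]
  · have := congrArg Subtype.val hg0
    rw [Fin.sum_univ_two] at this
    simpa [mulVec_add, mulVec_smul] using this

lemma vecMulVec_mul_eq_zero {F : Type*} [Field F] {n : ℕ}
    (p q : Fin n → F) (B : Matrix (Fin n) (Fin n) F) (h : q ᵥ* B = 0) :
    vecMulVec p q * B = 0 := by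
  funext i j
  have hj := congrFun h j
  simp only [vecMul, dotProduct] at hj
  simp [mul_apply, vecMulVec_apply, mul_assoc, ← Finset.mul_sum, hj]

lemma mul_vecMulVec_eq_zero {F : Type*} [Field F] {n : ℕ}
    (p q : Fin n → F) (B : Matrix (Fin n) (Fin n) F) (h : B *ᵥ p = 0) :
    B * vecMulVec p q = 0 := by
  funext i j
  have hi := congrFun h i
  simp only [mulVec, dotProduct] at hi
  simp [mul_apply, vecMulVec_apply, ← mul_assoc, ← Finset.sum_mul, hi]

lemma nonscalar_vecMulVec {F : Type*} [Field F] {n : ℕ} (hn : 2 ≤ n)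
    {p q : Fin n → F} {ip jq : Fin n} (hip : p ip ≠ 0) (hjq : q jq ≠ 0) :
    ¬ IsScalarM (vecMulVec p q) := by
  rintro ⟨c, hc⟩
  have hdiag : ∀ a, p a * q a = c := by
    intro a
    have := congrFun (congrFun hc a) a
    simpa [vecMulVec_apply, one_apply] using this
  have hoff : ∀ a b, a ≠ b → p a * q b = 0 := by
    intro a b hab
    have := congrFun (congrFun hc a) b
    simpa [vecMulVec_apply, one_apply_ne hab] using this
  by_cases hc0 : c = 0
  · rcases eq_or_ne ip jq with h | h
    · exact mul_ne_zero hip hjq (h ▸ (hdiag ip).trans hc0)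
    · exact mul_ne_zero hip hjq ((hoff ip jq h))
  · have hab : (⟨0, by omega⟩ : Fin n) ≠ ⟨1, by omega⟩ := by
      simp [Fin.ext_iff]
    have h1 := hdiag ⟨0, by omega⟩
    have h2 := hdiag ⟨1, by omega⟩
    have h3 := hoff _ _ hab
    rcases mul_eq_zero.1 h3 with h | h
    · rw [h, zero_mul] at h1; exact hc0 h1.symm
    · rw [h, mul_zero] at h2; exact hc0 h2.symm

set_option maxHeartbeats 1000000 in
theorem stmt3 (F : Type*) [Field F] (k₁ k₂ : ℕ) (h₁ : 1 ≤ k₁) (h₂ : 1 ≤ k₂)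
    (A : Matrix (Fin (k₁ + k₂)) (Fin (k₁ + k₂)) F)
    (hA : A = (Matrix.fromBlocks (Jblock F k₁) 0 0 (Jblock F k₂)).submatrix
      finSumFinEquiv.symm finSumFinEquiv.symm)
    (R : Matrix (Fin (k₁ + k₂)) (Fin (k₁ + k₂)) F) (hR : R.rank = 1) :
    (∃ Z : Matrix (Fin (k₁ + k₂)) (Fin (k₁ + k₂)) F,
      ¬ IsScalarM Z ∧ Z * A = A * Z ∧ Z * R = R * Z) ∧
    (∀ (hA' : ¬ IsScalarM A) (hR' : ¬ IsScalarM R),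
      (CommGraph F (k₁ + k₂)).dist ⟨A, hA'⟩ ⟨R, hR'⟩ ≤ 2) := by
  set e := finSumFinEquiv (m := k₁) (n := k₂) with he
  set j0 := e (Sum.inl ⟨0, h₁⟩) with hj0
  set j1 := e (Sum.inr ⟨0, h₂⟩) with hj1
  set i0 := e (Sum.inl ⟨k₁ - 1, by omega⟩) with hi0
  set i1 := e (Sum.inr ⟨k₂ - 1, by omega⟩) with hi1
  have hjne : j0 ≠ j1 := by
    intro h
    have := e.injective h
    simp at this
  have hine : i0 ≠ i1 := by
    intro h
    have := e.injective h
    simp at this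
  -- zero columns of A
  have hcol0 : ∀ i, A i j0 = 0 := by
    intro i
    rw [hA]
    simp only [submatrix_apply, hj0, Equiv.symm_apply_apply]
    rcases hi : e.symm i with a | b <;> simp [fromBlocks, Jblock]
  have hcol1 : ∀ i, A i j1 = 0 := by
    intro i
    rw [hA]
    simp only [submatrix_apply, hj1, Equiv.symm_apply_apply]
    rcases hi : e.symm i with a | b <;> simp [fromBlocks, Jblock]
  -- zero rows of A
  have hrow0 : ∀ j, A i0 j = 0 := by
    intro j
    rw [hA]
    simp only [submatrix_apply, hi0, Equiv.symm_apply_apply]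
    rcases hj : e.symm j with a | b <;> simp [fromBlocks, Jblock]
    intro h
    have := a.isLt
    omega
  have hrow1 : ∀ j, A i1 j = 0 := by
    intro j
    rw [hA]
    simp only [submatrix_apply, hi1, Equiv.symm_apply_apply]
    rcases hj : e.symm j with a | b <;> simp [fromBlocks, Jblock]
    intro h
    have := b.isLt
    omega
  obtain ⟨p, hp0, hpA, hpR⟩ := key_ker A R hR.le j0 j1 hjne hcol0 hcol1
  obtain ⟨q, hq0, hqA, hqR⟩ := key_ker Aᵀ Rᵀ (by rw [Matrix.rank_transpose]; exact hR.le)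
    i0 i1 hine (fun i => hrow0 i) (fun i => hrow1 i)
  rw [mulVec_transpose] at hqA hqR
  set Z := vecMulVec p q with hZ
  have hZA0 : Z * A = 0 := vecMulVec_mul_eq_zero p q A hqA
  have hAZ0 : A * Z = 0 := mul_vecMulVec_eq_zero p q A hpA
  have hZR0 : Z * R = 0 := vecMulVec_mul_eq_zero p q R hqR
  have hRZ0 : R * Z = 0 := mul_vecMulVec_eq_zero p q R hpR
  obtain ⟨ip, hip⟩ := Function.ne_iff.1 hp0
  obtain ⟨jq, hjq⟩ := Function.ne_iff.1 hq0
  simp only [Pi.zero_apply] at hip hjq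
  have hn2 : 2 ≤ k₁ + k₂ := by omega
  have hZns : ¬ IsScalarM Z := nonscalar_vecMulVec hn2 hip hjq
  refine ⟨⟨Z, hZns, by rw [hZA0, hAZ0], by rw [hZR0, hRZ0]⟩, ?_⟩
  intro hA' hR'
  by_cases hcom : A * R = R * A
  · rcases eq_or_ne A R with heq | hne
    · have : (⟨A, hA'⟩ : {X : Matrix (Fin (k₁ + k₂)) (Fin (k₁ + k₂)) F // ¬ IsScalarM X}) =
        ⟨R, hR'⟩ := Subtype.ext heq
      rw [this, SimpleGraph.dist_self]
      omega
    · have adj : (CommGraph F (k₁ + k₂)).Adj ⟨A, hA'⟩ ⟨R, hR'⟩ :=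
        ⟨fun h => hne (congrArg Subtype.val h), hcom⟩
      have := SimpleGraph.dist_le adj.toWalk
      simp at this
      omega
  · have hZA' : Z ≠ A := by
      intro h
      exact hcom (by rw [← h, hZR0, hRZ0])
    have hZR' : Z ≠ R := by
      intro h
      exact hcom (by rw [← h, hZA0, hAZ0])
    have adj1 : (CommGraph F (k₁ + k₂)).Adj ⟨A, hA'⟩ ⟨Z, hZns⟩ :=
      ⟨fun h => hZA' (congrArg Subtype.val h).symm, by rw [hAZ0, hZA0]⟩
    have adj2 : (CommGraph F (k₁ + k₂)).Adj ⟨Z, hZns⟩ ⟨R, hR'⟩ :=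
      ⟨fun h => hZR' (congrArg Subtype.val h), by rw [hZR0, hRZ0]⟩
    have := SimpleGraph.dist_le (SimpleGraph.Walk.cons adj1 (SimpleGraph.Walk.cons adj2 SimpleGraph.Walk.nil))
    simpa using this
end

section
/- Let F be an algebraically closed field and A ∈ M_n(F) a non-scalar matrix that is maximal with respect to the centralizer inclusion preorder (C(A) ⊆ C(X) implies C(A) = C(X) or X scalar). Then A = αI + βP for a non-scalar idempotent P and β ≠ 0, or A = αI + βN for a nonzero square-zero matrix N and β ≠ 0. -/
open Matrix

section Helpers
variable {F : Type*} [Field F] {n : ℕ}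

lemma myMul_vecMulVec (M : Matrix (Fin n) (Fin n) F) (u w : Fin n → F) :
    M * Matrix.vecMulVec u w = Matrix.vecMulVec (M *ᵥ u) w := by
  ext i j
  simp [Matrix.mul_apply, Matrix.vecMulVec_apply, Matrix.mulVec, dotProduct,
    Finset.sum_mul, mul_assoc]

lemma myVecMulVec_mul (u w : Fin n → F) (M : Matrix (Fin n) (Fin n) F) :
    Matrix.vecMulVec u w * M = Matrix.vecMulVec u (w ᵥ* M) := by
  ext i j
  simp [Matrix.mul_apply, Matrix.vecMulVec_apply, Matrix.vecMul, dotProduct,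
    Finset.mul_sum, mul_assoc]

lemma myExists_entry {M : Matrix (Fin n) (Fin n) F} (h : M ≠ 0) : ∃ i j, M i j ≠ 0 := by
  by_contra hc
  push_neg at hc
  exact h (by ext i j; simpa using hc i j)

lemma myExt_mulVec {M M' : Matrix (Fin n) (Fin n) F} (h : ∀ v, M *ᵥ v = M' *ᵥ v) : M = M' := by
  ext i j
  have := congrFun (h (Pi.single j 1)) i
  simpa using this

lemma myCommute_aeval {A Y : Matrix (Fin n) (Fin n) F} (h : A * Y = Y * A) (p : Polynomial F) :
    (Polynomial.aeval A p) * Y = Y * (Polynomial.aeval A p) :=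
  ((Algebra.commute_of_mem_adjoin_singleton_of_commute
    (Polynomial.aeval_mem_adjoin_singleton F A) (show Commute Y A from h.symm)).symm).eq

/-- If `Z` lies in the corner `P·M·P` and commutes with every `P*X*P`, then `Z` is a scalar
multiple of `P`. -/
lemma myCorner {P Z : Matrix (Fin n) (Fin n) F} (hP : P * P = P) (hZ : P * Z * P = Z)
    (hc : ∀ X, Z * (P * X * P) = (P * X * P) * Z) : ∃ c : F, Z = c • P := by
  by_cases hP0 : P = 0
  · exact ⟨(0:F), by rw [← hZ, hP0]; simp⟩
  obtain ⟨i₀, j₀, hij⟩ := myExists_entry hP0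
  have hPZ : P * Z = Z := by
    conv_lhs => rw [← hZ]
    rw [← Matrix.mul_assoc, ← Matrix.mul_assoc, hP, hZ]
  have hZP : Z * P = Z := by
    conv_lhs => rw [← hZ]
    rw [Matrix.mul_assoc, Matrix.mul_assoc, hP, ← Matrix.mul_assoc, hZ]
  -- main identity
  have key : ∀ (v φ : Fin n → F) (i j : Fin n),
      (Z *ᵥ (P *ᵥ v)) i * (φ ᵥ* P) j = (P *ᵥ v) i * (φ ᵥ* Z) j := by
    intro v φ i j
    have h1 := hc (Matrix.vecMulVec v φ)
    rw [myMul_vecMulVec, myVecMulVec_mul] at h1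
    -- h1 : Z * vecMulVec (P *ᵥ v) (φ ᵥ* P) = vecMulVec (P *ᵥ v) (φ ᵥ* P) * Z
    rw [myMul_vecMulVec, myVecMulVec_mul, Matrix.vecMul_vecMul, hPZ] at h1
    have := congrFun (congrFun h1 i) j
    simpa [Matrix.vecMulVec_apply] using this
  set c : F := Z i₀ j₀ * (P i₀ j₀)⁻¹ with hcdef
  have hcol : ∀ v, Z *ᵥ (P *ᵥ v) = c • (P *ᵥ v) := by
    intro v
    funext i
    have hthis := key v (Pi.single i₀ 1) i j₀
    simp only [Matrix.single_vecMul, one_mul, one_smul, Matrix.row] at hthis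
    -- hthis : (Z *ᵥ (P *ᵥ v)) i * P i₀ j₀ = (P *ᵥ v) i * Z i₀ j₀
    have h2 : (Z *ᵥ P *ᵥ v) i = (P *ᵥ v) i * Z i₀ j₀ * (P i₀ j₀)⁻¹ := by
      rw [← hthis, mul_assoc, mul_inv_cancel₀ hij, mul_one]
    rw [h2, hcdef]
    simp only [Pi.smul_apply, smul_eq_mul]
    ring
  have hZPc : Z * P = c • P := by
    apply myExt_mulVec
    intro v
    rw [← Matrix.mulVec_mulVec, Matrix.smul_mulVec]
    exact hcol v
  exact ⟨c, by rw [← hZP, hZPc]⟩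

/-- bicommutant of an idempotent -/
lemma myIdem (P A : Matrix (Fin n) (Fin n) F) (hP : P * P = P)
    (hcomm : ∀ Y, P * Y = Y * P → A * Y = Y * A) :
    ∃ a b : F, A = a • 1 + b • P := by
  have hAP : A * P = P * A := hcomm P rfl
  -- the general corner claim
  have claim : ∀ R : Matrix (Fin n) (Fin n) F, R * R = R → A * R = R * A →
      (∀ X, A * (R * X * R) = (R * X * R) * A) → ∃ c : F, R * A * R = c • R := by
    intro R hR hAR hX
    have e1 : R * A * R = A * R := by
      rw [← hAR, Matrix.mul_assoc, hR]
    have e2 : R * A * R = R * A := by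
      rw [Matrix.mul_assoc, hAR, ← Matrix.mul_assoc, hR]
    apply myCorner hR
    · -- R * (R * A * R) * R = R * A * R
      rw [e2, ← Matrix.mul_assoc R R A, hR]
      exact e2
    · intro X
      have hRXR : R * (R * X * R) = R * X * R := by
        rw [← Matrix.mul_assoc, ← Matrix.mul_assoc, hR]
      have hRXR' : (R * X * R) * R = R * X * R := by
        rw [Matrix.mul_assoc, hR]
      calc R * A * R * (R * X * R) = A * (R * (R * X * R)) := by rw [e1, Matrix.mul_assoc]
        _ = A * (R * X * R) := by rw [hRXR]
        _ = (R * X * R) * A := hX X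
        _ = (R * X * R) * R * A := by rw [hRXR']
        _ = (R * X * R) * (R * A) := by rw [Matrix.mul_assoc]
        _ = (R * X * R) * (R * A * R) := by rw [e2]
  have hPXP : ∀ X, A * (P * X * P) = (P * X * P) * A := by
    intro X
    apply hcomm
    have l : P * (P * X * P) = P * X * P := by
      rw [← Matrix.mul_assoc, ← Matrix.mul_assoc, hP]
    have r : (P * X * P) * P = P * X * P := by
      rw [Matrix.mul_assoc, hP]
    rw [l, r]
  obtain ⟨a₁, h₁⟩ := claim P hP hAP hPXP
  set Q : Matrix (Fin n) (Fin n) F := 1 - P with hQdef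
  have hQ : Q * Q = Q := by
    rw [hQdef, sub_mul, one_mul, mul_sub, mul_one, hP]
    abel
  have hAQ : A * Q = Q * A := by
    rw [hQdef, mul_sub, sub_mul, mul_one, one_mul, hAP]
  have hPQ : P * Q = 0 := by rw [hQdef, mul_sub, mul_one, hP, sub_self]
  have hQP : Q * P = 0 := by rw [hQdef, sub_mul, one_mul, hP, sub_self]
  have hQXQ : ∀ X, A * (Q * X * Q) = (Q * X * Q) * A := by
    intro X
    apply hcomm
    have l : P * (Q * X * Q) = 0 := by
      rw [← Matrix.mul_assoc, ← Matrix.mul_assoc, hPQ, Matrix.zero_mul, Matrix.zero_mul]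
    have r : (Q * X * Q) * P = 0 := by
      rw [Matrix.mul_assoc, hQP, Matrix.mul_zero]
    rw [l, r]
  obtain ⟨a₂, h₂⟩ := claim Q hQ hAQ hQXQ
  have e1 : P * A * P = A * P := by rw [← hAP, Matrix.mul_assoc, hP]
  have e2 : Q * A * Q = A - A * P - P * A + P * A * P := by
    rw [hQdef]
    simp only [sub_mul, mul_sub, one_mul, mul_one]
    abel
  have hsum : P * A * P + Q * A * Q = A := by
    rw [e2, e1, hAP]
    abel
  refine ⟨a₂, a₁ - a₂, ?_⟩
  rw [← hsum, h₁, h₂, hQdef]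
  simp only [smul_sub, sub_smul]
  abel


/-- bicommutant of a square-zero matrix -/
lemma mySqZero (N A : Matrix (Fin n) (Fin n) F) (hN2 : N * N = 0) (hN0 : N ≠ 0)
    (hcomm : ∀ Y, N * Y = Y * N → A * Y = Y * A) :
    ∃ a b : F, A = a • 1 + b • N := by
  obtain ⟨i₀, j₀, hij⟩ := myExists_entry hN0
  -- a vector in the image of N (hence in its kernel), with nonzero i₀ coordinate
  set u₁ : Fin n → F := N *ᵥ Pi.single j₀ 1 with hu₁def
  have hu₁ker : N *ᵥ u₁ = 0 := by
    rw [hu₁def, Matrix.mulVec_mulVec, hN2, Matrix.zero_mulVec]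
  have hu₁ne : u₁ i₀ ≠ 0 := by
    simpa [hu₁def] using hij
  -- a covector in the image of Nᵀ, with nonzero j₀ coordinate
  set w₁ : Fin n → F := Pi.single i₀ 1 ᵥ* N with hw₁def
  have hw₁ker : w₁ ᵥ* N = 0 := by
    rw [hw₁def, Matrix.vecMul_vecMul, hN2, Matrix.vecMul_zero]
  have hw₁ne : w₁ j₀ ≠ 0 := by
    simpa [hw₁def] using hij
  -- rank-one matrices u wᵀ with Nu = 0, wN = 0 commute with N
  have key : ∀ (u w : Fin n → F), N *ᵥ u = 0 → w ᵥ* N = 0 →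
      ∀ i j, (A *ᵥ u) i * w j = u i * (w ᵥ* A) j := by
    intro u w hu hw i j
    have hY : N * Matrix.vecMulVec u w = Matrix.vecMulVec u w * N := by
      rw [myMul_vecMulVec, myVecMulVec_mul, hu, hw]
      ext i' j'
      simp [Matrix.vecMulVec_apply]
    have h1 := hcomm _ hY
    rw [myMul_vecMulVec, myVecMulVec_mul] at h1
    have := congrFun (congrFun h1 i) j
    simpa [Matrix.vecMulVec_apply] using this
  set α : F := (w₁ ᵥ* A) j₀ * (w₁ j₀)⁻¹ with hαdef
  have step4 : ∀ u, N *ᵥ u = 0 → A *ᵥ u = α • u := by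
    intro u hu
    funext i
    have h1 := key u w₁ hu hw₁ker i j₀
    have h2 : (A *ᵥ u) i = u i * (w₁ ᵥ* A) j₀ * (w₁ j₀)⁻¹ := by
      rw [← h1, mul_assoc, mul_inv_cancel₀ hw₁ne, mul_one]
    rw [h2, hαdef]
    simp only [Pi.smul_apply, smul_eq_mul]
    ring
  have step5 : ∀ w, w ᵥ* N = 0 → w ᵥ* A = α • w := by
    intro w hw
    funext j
    have h1 := key u₁ w hu₁ker hw i₀ j
    rw [step4 u₁ hu₁ker] at h1
    simp only [Pi.smul_apply, smul_eq_mul] at h1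
    -- h1 : α * u₁ i₀ * w j = u₁ i₀ * (w ᵥ* A) j
    have h2 : u₁ i₀ * ((w ᵥ* A) j) = u₁ i₀ * (α * w j) := by linear_combination -h1
    simp only [Pi.smul_apply, smul_eq_mul]
    exact mul_left_cancel₀ hu₁ne h2
  -- the recentered matrix
  set A' : Matrix (Fin n) (Fin n) F := A - α • 1 with hA'def
  have hstep4' : ∀ u, N *ᵥ u = 0 → A' *ᵥ u = 0 := by
    intro u hu
    rw [hA'def, Matrix.sub_mulVec, step4 u hu, Matrix.smul_mulVec, Matrix.one_mulVec,
      sub_self]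
  have hsm1 : ∀ w : Fin n → F, w ᵥ* ((α : F) • (1 : Matrix (Fin n) (Fin n) F)) = α • w := by
    intro w
    funext j
    simp [Matrix.vecMul, dotProduct, Matrix.one_apply, mul_comm]
  have hstep5' : ∀ w, w ᵥ* N = 0 → w ᵥ* A' = 0 := by
    intro w hw
    rw [hA'def, Matrix.vecMul_sub, step5 w hw, hsm1, sub_self]
  have hA'N : A' * N = 0 := by
    apply myExt_mulVec (M' := 0)
    intro v
    rw [Matrix.zero_mulVec, ← Matrix.mulVec_mulVec]
    exact hstep4' _ (by rw [Matrix.mulVec_mulVec, hN2, Matrix.zero_mulVec])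
  have hNA' : N * A' = 0 := by
    ext i j
    have h1 : (N i) ᵥ* N = 0 := by
      have : N i = Pi.single i 1 ᵥ* N := by simp; rfl
      rw [this, Matrix.vecMul_vecMul, hN2, Matrix.vecMul_zero]
    have h2 := congrFun (hstep5' (N i) h1) j
    simpa [Matrix.vecMul, Matrix.mul_apply, dotProduct] using h2
  -- A' commutes with everything commuting with N
  have hcomm' : ∀ Y, N * Y = Y * N → A' * Y = Y * A' := by
    intro Y hY
    rw [hA'def, sub_mul, mul_sub, hcomm Y hY, Matrix.smul_mul, Matrix.mul_smul, one_mul,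
      mul_one]
  -- the family N·uwᵀ + uwᵀ·N
  have key2 : ∀ (u w : Fin n → F) (i j : Fin n),
      (A' *ᵥ u) i * (w ᵥ* N) j = (N *ᵥ u) i * (w ᵥ* A') j := by
    intro u w i j
    set Y : Matrix (Fin n) (Fin n) F :=
      N * Matrix.vecMulVec u w + Matrix.vecMulVec u w * N with hYdef
    have hYcomm : N * Y = Y * N := by
      rw [hYdef, Matrix.mul_add, Matrix.add_mul,
        ← Matrix.mul_assoc N N (Matrix.vecMulVec u w), hN2, Matrix.zero_mul,
        Matrix.mul_assoc (Matrix.vecMulVec u w) N N, hN2, Matrix.mul_zero, zero_add, add_zero,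
        Matrix.mul_assoc N (Matrix.vecMulVec u w) N]
    have h1 := hcomm' Y hYcomm
    have hL : A' * Y = Matrix.vecMulVec (A' *ᵥ u) (w ᵥ* N) := by
      rw [hYdef, Matrix.mul_add, ← Matrix.mul_assoc A' N (Matrix.vecMulVec u w), hA'N,
        Matrix.zero_mul, zero_add, ← Matrix.mul_assoc A' (Matrix.vecMulVec u w) N,
        myMul_vecMulVec, myVecMulVec_mul]
    have hR : Y * A' = Matrix.vecMulVec (N *ᵥ u) (w ᵥ* A') := by
      rw [hYdef, Matrix.add_mul, Matrix.mul_assoc (Matrix.vecMulVec u w) N A', hNA',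
        Matrix.mul_zero, add_zero, Matrix.mul_assoc N (Matrix.vecMulVec u w) A',
        myVecMulVec_mul, myMul_vecMulVec]
    rw [hL, hR] at h1
    have := congrFun (congrFun h1 i) j
    simpa [Matrix.vecMulVec_apply] using this
  set β : F := A' i₀ j₀ * (N i₀ j₀)⁻¹ with hβdef
  have hfin : ∀ u, A' *ᵥ u = β • (N *ᵥ u) := by
    intro u
    funext i
    have h1 := key2 u (Pi.single i₀ 1) i j₀
    simp only [Matrix.single_vecMul, one_mul, one_smul, Matrix.row] at h1
    -- h1 : (A' *ᵥ u) i * N i₀ j₀ = (N *ᵥ u) i * A' i₀ j₀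
    have h2 : (A' *ᵥ u) i = (N *ᵥ u) i * A' i₀ j₀ * (N i₀ j₀)⁻¹ := by
      rw [← h1, mul_assoc, mul_inv_cancel₀ hij, mul_one]
    rw [h2, hβdef]
    simp only [Pi.smul_apply, smul_eq_mul]
    ring
  have hA'βN : A' = β • N := by
    apply myExt_mulVec
    intro v
    rw [Matrix.smul_mulVec]
    exact hfin v
  refine ⟨α, β, ?_⟩
  have : A - α • 1 = β • N := by rw [← hA'def]; exact hA'βN
  linear_combination (norm := abel) this

end Helpers


open Polynomial in
theorem stmt7 (F : Type*) [Field F] [IsAlgClosed F] (n : ℕ)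
    (A : Matrix (Fin n) (Fin n) F) (hA : ¬ IsScalarM A)
    (hmax : ∀ X : Matrix (Fin n) (Fin n) F,
      {Y : Matrix (Fin n) (Fin n) F | A * Y = Y * A} ⊆ {Y | X * Y = Y * X} →
      {Y : Matrix (Fin n) (Fin n) F | A * Y = Y * A} = {Y | X * Y = Y * X} ∨ IsScalarM X) :
    (∃ (α β : F) (P : Matrix (Fin n) (Fin n) F),
      P * P = P ∧ ¬ IsScalarM P ∧ β ≠ 0 ∧ A = α • 1 + β • P) ∨
    (∃ (α β : F) (N : Matrix (Fin n) (Fin n) F),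
      N * N = 0 ∧ N ≠ 0 ∧ β ≠ 0 ∧ A = α • 1 + β • N) := by
  rcases Nat.eq_zero_or_pos n with hn0 | hn
  · subst hn0
    exact absurd ⟨0, by ext i j; exact i.elim0⟩ hA
  haveI : Nonempty (Fin n) := ⟨⟨0, hn⟩⟩
  have hscal0 : ∀ c : F, c • (1 : Matrix (Fin n) (Fin n) F) = 0 → c = 0 := by
    intro c h
    have := congrFun (congrFun h ⟨0, hn⟩) ⟨0, hn⟩
    simpa [Matrix.one_apply] using this
  have hint : IsIntegral F A := IsIntegral.of_finite F A
  set μ : Polynomial F := minpoly F A with hμdef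
  have hμ0 : μ ≠ 0 := minpoly.ne_zero hint
  have hμmonic : μ.Monic := minpoly.monic hint
  have hμaeval : Polynomial.aeval A μ = 0 := minpoly.aeval F A
  have hdeg2 : 2 ≤ μ.natDegree := by
    by_contra hlt
    push_neg at hlt
    have hpos : 0 < μ.natDegree := minpoly.natDegree_pos hint
    have h1 : μ.natDegree = 1 := by omega
    have heq := hμmonic.eq_X_add_C h1
    apply hA
    refine ⟨-(μ.coeff 0), ?_⟩
    have h2 : Polynomial.aeval A (X + Polynomial.C (μ.coeff 0)) = 0 := by
      rw [← heq]; exact hμaeval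
    rw [map_add, Polynomial.aeval_X, Polynomial.aeval_C,
      Algebra.algebraMap_eq_smul_one] at h2
    rw [neg_smul]
    exact eq_neg_of_add_eq_zero_left h2
  obtain ⟨α, hroot⟩ := IsAlgClosed.exists_root μ (by
    intro h
    rw [Polynomial.degree_eq_natDegree hμ0] at h
    have h0 : μ.natDegree = 0 := by exact_mod_cast h
    omega)
  set k : ℕ := μ.rootMultiplicity α with hkdef
  set g : Polynomial F := μ /ₘ (X - Polynomial.C α) ^ k with hgdef
  have hfact : (X - Polynomial.C α) ^ k * g = μ :=
    μ.pow_mul_divByMonic_rootMultiplicity_eq α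
  have hgα : ¬ g.IsRoot α :=
    Polynomial.eval_divByMonic_pow_rootMultiplicity_ne_zero α hμ0
  have hk1 : 0 < k := (Polynomial.rootMultiplicity_pos hμ0).mpr hroot
  have hg0 : g ≠ 0 := by
    intro h
    rw [h, mul_zero] at hfact
    exact hμ0 hfact.symm
  have hdegμ : μ.natDegree = k + g.natDegree := by
    conv_lhs => rw [← hfact]
    rw [Polynomial.natDegree_mul (pow_ne_zero _ (Polynomial.X_sub_C_ne_zero α)) hg0,
      Polynomial.natDegree_pow, Polynomial.natDegree_X_sub_C, mul_one]
  rcases lt_or_ge k 2 with hk2 | hk2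
  · -- k = 1 : idempotent case
    have hk1' : k = 1 := by omega
    have hfact1 : (X - Polynomial.C α) * g = μ := by rw [← hfact, hk1', pow_one]
    have hcop : IsCoprime (X - Polynomial.C α) g :=
      (Polynomial.irreducible_X_sub_C α).coprime_iff_not_dvd.mpr
        (fun hdvd => hgα (Polynomial.dvd_iff_isRoot.mp hdvd))
    obtain ⟨s, t, hst⟩ := hcop
    set P : Matrix (Fin n) (Fin n) F := Polynomial.aeval A (t * g) with hPdef
    have hPP : P * P = P := by
      have hpoly : (t * g) * (t * g) - t * g = -(s * t * μ) := by
        rw [← hfact1]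
        linear_combination (t * g) * hst
      have h2 : P * P - P = Polynomial.aeval A ((t * g) * (t * g) - t * g) := by
        rw [hPdef, ← _root_.map_mul, ← _root_.map_sub]
      have h3 : Polynomial.aeval A ((t * g) * (t * g) - t * g) = 0 := by
        rw [hpoly, map_neg, _root_.map_mul, hμaeval, mul_zero, neg_zero]
      exact sub_eq_zero.mp (h2.trans h3)
    have hPns : ¬ IsScalarM P := by
      rintro ⟨c, hc⟩
      have h4 : (c • (1 : Matrix (Fin n) (Fin n) F)) * (c • 1) = (c * c) • 1 := by
        rw [smul_mul_assoc, one_mul, smul_smul]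
      have h5 : (c * c) • (1 : Matrix (Fin n) (Fin n) F) = c • 1 := by
        rw [← h4, ← hc, hPP]
      have hcc : c * c = c := by
        have := congrFun (congrFun h5 ⟨0, hn⟩) ⟨0, hn⟩
        simpa [Matrix.one_apply] using this
      have hc01 : c = 0 ∨ c = 1 := by
        rcases mul_eq_zero.mp (show c * (c - 1) = 0 by linear_combination hcc) with h | h
        · exact Or.inl h
        · exact Or.inr (sub_eq_zero.mp h)
      rcases hc01 with h | h
      · -- P = 0
        have hP0 : Polynomial.aeval A (t * g) = 0 := by
          rw [← hPdef, hc, h, zero_smul]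
        have hdvd : μ ∣ t * g := minpoly.dvd F A hP0
        have hdvd1 : (X - Polynomial.C α) ∣ 1 := by
          rw [← hst]
          exact dvd_add (dvd_mul_left _ s) (dvd_trans ⟨g, hfact1.symm⟩ hdvd)
        exact Polynomial.not_isUnit_X_sub_C α (isUnit_of_dvd_one hdvd1)
      · -- P = 1
        have h6 : Polynomial.aeval A (t * g - 1) = 0 := by
          rw [_root_.map_sub, ← hPdef, hc, h, one_smul, _root_.map_one, sub_self]
        have hdvd : μ ∣ t * g - 1 := minpoly.dvd F A h6
        have h7 : t * g - 1 = -(s * (X - Polynomial.C α)) := by linear_combination hst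
        have h8 : μ ∣ s * (X - Polynomial.C α) := by
          rw [← dvd_neg, ← h7]; exact hdvd
        have h9 : (X - Polynomial.C α) * g ∣ (X - Polynomial.C α) * s := by
          rw [hfact1, mul_comm (X - Polynomial.C α) s]; exact h8
        have h10 : g ∣ s := (mul_dvd_mul_iff_left (Polynomial.X_sub_C_ne_zero α)).mp h9
        have h11 : g ∣ 1 := by
          rw [← hst]
          exact dvd_add (h10.mul_right _) (dvd_mul_left g t)
        have h12 := Polynomial.natDegree_eq_zero_of_isUnit (isUnit_of_dvd_one h11)
        omega
    rcases hmax P (fun Y hY => by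
        show P * Y = Y * P
        rw [hPdef]
        exact myCommute_aeval hY (t * g)) with heq | hscal
    · obtain ⟨a, b, hab⟩ := myIdem P A hPP (fun Y hY => (Set.ext_iff.mp heq Y).mpr hY)
      have hb : b ≠ 0 := fun h => hA ⟨a, by rw [hab, h, zero_smul, add_zero]⟩
      exact Or.inl ⟨a, b, P, hPP, hPns, hb, hab⟩
    · exact absurd hscal hPns
  · -- k ≥ 2 : square-zero case
    set m : ℕ := (k + 1) / 2 with hmdef
    have hmk : m < k := by omega
    set f : Polynomial F := (X - Polynomial.C α) ^ m * g with hfdef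
    have hf0 : f ≠ 0 := mul_ne_zero (pow_ne_zero _ (Polynomial.X_sub_C_ne_zero α)) hg0
    have hpow : (X - Polynomial.C α) ^ m * (X - Polynomial.C α) ^ m
        = (X - Polynomial.C α) ^ k * (X - Polynomial.C α) ^ (m + m - k) := by
      rw [← pow_add, ← pow_add]
      congr 1
      omega
    have hfdvd : μ ∣ f * f := by
      refine ⟨(X - Polynomial.C α) ^ (m + m - k) * g, ?_⟩
      calc f * f = ((X - Polynomial.C α) ^ m * (X - Polynomial.C α) ^ m) * (g * g) := by
            rw [hfdef]; ring
        _ = ((X - Polynomial.C α) ^ k * (X - Polynomial.C α) ^ (m + m - k)) * (g * g) := by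
            rw [hpow]
        _ = ((X - Polynomial.C α) ^ k * g) * ((X - Polynomial.C α) ^ (m + m - k) * g) := by
            ring
        _ = μ * ((X - Polynomial.C α) ^ (m + m - k) * g) := by rw [hfact]
    set N : Matrix (Fin n) (Fin n) F := Polynomial.aeval A f with hNdef
    have hN2 : N * N = 0 := by
      obtain ⟨q, hq⟩ := hfdvd
      rw [hNdef, ← _root_.map_mul, hq, _root_.map_mul, hμaeval, zero_mul]
    have hN0 : N ≠ 0 := by
      intro h
      have hdvd : μ ∣ f := minpoly.dvd F A (by rw [← hNdef]; exact h)
      have hle := Polynomial.natDegree_le_of_dvd hdvd hf0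
      have hdegf : f.natDegree = m + g.natDegree := by
        rw [hfdef, Polynomial.natDegree_mul (pow_ne_zero _ (Polynomial.X_sub_C_ne_zero α)) hg0,
          Polynomial.natDegree_pow, Polynomial.natDegree_X_sub_C, mul_one]
      omega
    rcases hmax N (fun Y hY => by
        show N * Y = Y * N
        rw [hNdef]
        exact myCommute_aeval hY f) with heq | hscal
    · obtain ⟨a, b, hab⟩ := mySqZero N A hN2 hN0 (fun Y hY => (Set.ext_iff.mp heq Y).mpr hY)
      have hb : b ≠ 0 := fun h => hA ⟨a, by rw [hab, h, zero_smul, add_zero]⟩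
      exact Or.inr ⟨a, b, N, hN2, hN0, hb, hab⟩
    · obtain ⟨c, hc⟩ := hscal
      have h4 : (c • (1 : Matrix (Fin n) (Fin n) F)) * (c • 1) = (c * c) • 1 := by
        rw [smul_mul_assoc, one_mul, smul_smul]
      have h5 : (c * c) • (1 : Matrix (Fin n) (Fin n) F) = 0 := by
        rw [← h4, ← hc, hN2]
      have hc0 : c = 0 := mul_self_eq_zero.mp (hscal0 _ h5)
      exact absurd (by rw [hc, hc0, zero_smul]) hN0
end

section
/- Let P, Q ∈ M_n(F) be idempotents with rank P ≤ n/2 and rank Q ≤ n/2, where P is a diagonal 0-1 idempotent (a sum of distinct E_{σ(i)σ(i)}) and Q = S⁻¹ P' S with P' also a diagonal 0-1 idempotent and S invertible with all entries and all minors nonzero. Then PQ ≠ QP. -/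
open Matrix

lemma minor_vanish {F : Type*} [Field F] {n : ℕ}
    (S : Matrix (Fin n) (Fin n) F)
    (hminors : ∀ (k : ℕ) (f g : Fin k → Fin n), Function.Injective f →
      Function.Injective g → (S.submatrix f g).det ≠ 0)
    (v : Fin n → F) (A B : Finset (Fin n))
    (hvA : ∀ i, v i ≠ 0 → i ∈ A)
    (hcard : A.card ≤ B.card)
    (hSv : ∀ j ∈ B, S.mulVec v j = 0) : v = 0 := by
  classical
  set A' : Finset (Fin n) := A.filter (fun i => v i ≠ 0) with hA'
  have hA'card : A'.card ≤ B.card := le_trans (Finset.card_le_card (Finset.filter_subset _ _)) hcard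
  obtain ⟨B', hB'B, hB'card⟩ := B.exists_subset_card_eq hA'card
  set g : Fin A'.card → Fin n := ⇑(A'.orderEmbOfFin rfl) with hg
  set f : Fin A'.card → Fin n := ⇑(B'.orderEmbOfFin hB'card) with hf
  have hdet := hminors A'.card f g (B'.orderEmbOfFin hB'card).injective
    (A'.orderEmbOfFin rfl).injective
  have hmul : (S.submatrix f g).mulVec (v ∘ g) = 0 := by
    funext i
    have h1 : (S.submatrix f g).mulVec (v ∘ g) i
        = ∑ x ∈ A', S (f i) x * v x := by
      rw [Matrix.mulVec, dotProduct]
      simp only [Matrix.submatrix_apply, Function.comp]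
      exact Finset.sum_bij (fun j _ => g j) (fun j _ => A'.orderEmbOfFin_mem rfl j)
        (fun a _ b _ hab => (A'.orderEmbOfFin rfl).injective hab)
        (fun x hx => by
          have hr : x ∈ Set.range (A'.orderEmbOfFin rfl) := by
            rw [Finset.range_orderEmbOfFin]; exact hx
          obtain ⟨j, hj⟩ := hr
          exact ⟨j, Finset.mem_univ j, hj⟩)
        (fun j _ => rfl)
    rw [h1]
    have h3 : ∑ x ∈ A', S (f i) x * v x = ∑ x, S (f i) x * v x := by
      refine Finset.sum_subset A'.subset_univ (fun x _ hx => ?_)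
      have hvx : v x = 0 := by
        by_contra hvx
        exact hx (Finset.mem_filter.mpr ⟨hvA x hvx, hvx⟩)
      simp [hvx]
    rw [h3]
    have h4 := hSv (f i) (hB'B (B'.orderEmbOfFin_mem hB'card i))
    rw [Matrix.mulVec, dotProduct] at h4
    simpa using h4
  have hvg : v ∘ g = 0 := Matrix.eq_zero_of_mulVec_eq_zero hdet hmul
  funext i
  show v i = 0
  by_contra hvi
  have hiA : i ∈ A' := Finset.mem_filter.mpr ⟨hvA i hvi, hvi⟩
  have hr : i ∈ Set.range (A'.orderEmbOfFin rfl) := by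
    rw [Finset.range_orderEmbOfFin]; exact hiA
  obtain ⟨j, hj⟩ := hr
  have hvgj : v ((A'.orderEmbOfFin rfl) j) = 0 := congrFun hvg j
  rw [hj] at hvgj
  exact hvi hvgj

lemma diag_proj_entry {F : Type*} [Field F] {n : ℕ} (u : Finset (Fin n)) (a b : Fin n) :
    (∑ i ∈ u, Matrix.single i i (1 : F)) a b
      = if a = b ∧ a ∈ u then 1 else 0 := by
  classical
  rw [Matrix.sum_apply]
  have key : ∀ i, Matrix.single i i (1 : F) a b
      = if i = a then (if a = b then 1 else 0) else 0 := by
    intro i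
    simp only [Matrix.single, Matrix.of_apply]
    by_cases h1 : i = a
    · simp [h1]
    · simp [h1]
  simp_rw [key]
  rw [Finset.sum_ite_eq' u a]
  by_cases ha : a ∈ u <;> by_cases hab : a = b <;> simp [ha, hab]

theorem stmt11 (F : Type*) [Field F] (n : ℕ) (hn : 3 ≤ n)
    (s t : Finset (Fin n)) (hs : s.Nonempty) (ht : t.Nonempty)
    (hscard : 2 * s.card ≤ n) (htcard : 2 * t.card ≤ n)
    (P P' : Matrix (Fin n) (Fin n) F)
    (hP : P = ∑ i ∈ s, Matrix.single i i (1 : F))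
    (hP' : P' = ∑ i ∈ t, Matrix.single i i (1 : F))
    (S : Matrix (Fin n) (Fin n) F) (hS : IsUnit S)
    (hminors : ∀ (k : ℕ) (f g : Fin k → Fin n), Function.Injective f →
      Function.Injective g → (S.submatrix f g).det ≠ 0) :
    P * (S⁻¹ * P' * S) ≠ (S⁻¹ * P' * S) * P := by
  classical
  intro h
  have hSdet : IsUnit S.det := (Matrix.isUnit_iff_isUnit_det S).mp hS
  have hSinv' : S * S⁻¹ = 1 := Matrix.mul_nonsing_inv S hSdet
  have hPentry : ∀ a b, P a b = if a = b ∧ a ∈ s then 1 else 0 := by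
    intro a b; rw [hP]; exact diag_proj_entry s a b
  have hP'entry : ∀ a b, P' a b = if a = b ∧ a ∈ t then 1 else 0 := by
    intro a b; rw [hP']; exact diag_proj_entry t a b
  have hPmul : ∀ (M : Matrix (Fin n) (Fin n) F) a b,
      (P * M) a b = if a ∈ s then M a b else 0 := by
    intro M a b
    rw [Matrix.mul_apply]
    rw [Finset.sum_eq_single a (fun i _ hia => by
      rw [hPentry]
      rw [if_neg (fun hc => hia hc.1.symm), zero_mul])
      (fun hc => absurd (Finset.mem_univ a) hc)]
    rw [hPentry]
    by_cases has : a ∈ s <;> simp [has]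
  have hmulP' : ∀ (M : Matrix (Fin n) (Fin n) F) a b,
      (M * P') a b = if b ∈ t then M a b else 0 := by
    intro M a b
    rw [Matrix.mul_apply]
    rw [Finset.sum_eq_single b (fun i _ hib => by
      rw [hP'entry]
      rw [if_neg (fun hc => hib hc.1), mul_zero])
      (fun hc => absurd (Finset.mem_univ b) hc)]
    rw [hP'entry]
    by_cases hbt : b ∈ t <;> simp [hbt]
  have hP'mul : ∀ (M : Matrix (Fin n) (Fin n) F) a b,
      (P' * M) a b = if a ∈ t then M a b else 0 := by
    intro M a b
    rw [Matrix.mul_apply]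
    rw [Finset.sum_eq_single a (fun i _ hia => by
      rw [hP'entry]
      rw [if_neg (fun hc => hia hc.1.symm), zero_mul])
      (fun hc => absurd (Finset.mem_univ a) hc)]
    rw [hP'entry]
    by_cases hat : a ∈ t <;> simp [hat]
  -- all entries of S⁻¹ are nonzero
  have hSinv_ne : ∀ i k, S⁻¹ i k ≠ 0 := by
    intro i k hik
    set v : Fin n → F := fun j => S⁻¹ j k with hv
    have hSv : ∀ j, S.mulVec v j = (1 : Matrix (Fin n) (Fin n) F) j k := by
      intro j
      rw [← hSinv', Matrix.mul_apply, Matrix.mulVec, dotProduct]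
    have hvzero : v = 0 := by
      refine minor_vanish S hminors v ({i}ᶜ) ({k}ᶜ) ?_ ?_ ?_
      · intro x hx
        rw [Finset.mem_compl, Finset.mem_singleton]
        intro hxi
        exact hx (hxi ▸ hik)
      · simp [Finset.card_compl]
      · intro j hj
        rw [Finset.mem_compl, Finset.mem_singleton] at hj
        rw [hSv j, Matrix.one_apply, if_neg hj]
    have h1 : S.mulVec v k = 1 := by rw [hSv k, Matrix.one_apply, if_pos rfl]
    rw [hvzero] at h1
    simp [Matrix.mulVec] at h1
  have hst : s.card ≤ (tᶜ : Finset (Fin n)).card := by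
    rw [Finset.card_compl, Fintype.card_fin]
    omega
  set Q : Matrix (Fin n) (Fin n) F := S⁻¹ * P' * S with hQ
  have hPQ : P * Q = 0 := by
    funext a k
    set v : Fin n → F := fun j => (P * Q) j k with hv
    have hSPQ : S * (P * Q) = P' * (S * P) := by
      calc S * (P * Q) = S * (Q * P) := by rw [h]
        _ = ((S * S⁻¹) * P') * (S * P) := by
            rw [hQ]; simp only [Matrix.mul_assoc]
        _ = P' * (S * P) := by rw [hSinv', Matrix.one_mul]
    have hvzero : v = 0 := by
      refine minor_vanish S hminors v s (tᶜ) ?_ hst ?_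
      · intro x hx
        by_contra hxs
        apply hx
        show (P * Q) x k = 0
        rw [hPmul, if_neg hxs]
      · intro j hj
        rw [Finset.mem_compl] at hj
        have h5 : S.mulVec v j = (S * (P * Q)) j k := by
          rw [Matrix.mul_apply, Matrix.mulVec, dotProduct]
        rw [h5, hSPQ, hP'mul, if_neg hj]
    have := congrFun hvzero a
    simpa [hv] using this
  have hPSP' : P * (S⁻¹ * P') = 0 := by
    calc P * (S⁻¹ * P') = (P * Q) * S⁻¹ := by
          rw [hQ]
          simp only [Matrix.mul_assoc, hSinv', Matrix.mul_one]
      _ = 0 := by rw [hPQ, Matrix.zero_mul]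
  obtain ⟨i, hi⟩ := hs
  obtain ⟨k, hk⟩ := ht
  have hfin : (P * (S⁻¹ * P')) i k = S⁻¹ i k := by
    rw [hPmul, if_pos hi, hmulP', if_pos hk]
  rw [hPSP'] at hfin
  exact hSinv_ne i k (by simpa using hfin.symm)
end

section
/- Let F be an algebraically closed field and n ≥ 3. There exist an infinite family (X_α) of non-scalar matrices in M_n(F) and a rank-one matrix Z such that d(X_α, X_β) = 4 in the commuting graph for all α ≠ β, and d(X_α, Z) = 2 for all α. -/
open Matrix

namespace Stmt12Aux

variable {F : Type*} [Field F] {n : ℕ}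

/-- `Amat α k` is the `k`-th power of the companion matrix of `x^n - α·x`. -/
def Amat (α : F) (k : ℕ) : Matrix (Fin n) (Fin n) F :=
  Matrix.of fun i j =>
    (if (i : ℕ) = (j : ℕ) + k then (1 : F) else 0)
      + α * (if (i : ℕ) + n = (j : ℕ) + k + 1 ∧ 1 ≤ (i : ℕ) then 1 else 0)

/-- A generic element of the centralizer of the companion matrix. -/
def Mq (α : F) (q : ℕ → F) : Matrix (Fin n) (Fin n) F :=
  ∑ k ∈ Finset.range n, q k • Amat α k

lemma sum_pin (d t : ℕ) (P : Prop) [Decidable P] (w : F) :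
    (∑ m : Fin n, if ((m : ℕ) + d = t ∧ P) then w else 0)
      = if (d ≤ t ∧ t < n + d ∧ P) then w else 0 := by
  by_cases h : d ≤ t ∧ t < n + d ∧ P
  · rw [if_pos h]
    have ht : t - d < n := by omega
    rw [Finset.sum_eq_single_of_mem (⟨t - d, ht⟩ : Fin n) (Finset.mem_univ _)]
    · rw [if_pos ⟨by simp only [Fin.val_mk]; omega, h.2.2⟩]
    · intro b _ hb
      rw [if_neg]
      rintro ⟨hb1, -⟩
      exact hb (Fin.ext (by simp only [Fin.val_mk]; omega))
  · rw [if_neg h]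
    apply Finset.sum_eq_zero
    intro m _
    rw [if_neg]
    rintro ⟨h1, h2⟩
    have := m.isLt
    exact h ⟨by omega, by omega, h2⟩

lemma prod_entry (hn : 3 ≤ n) (α β : F) (k l : ℕ) (hk : k < n) (hl : l < n) (i j : Fin n) :
    ((Amat α k * Amat β l : Matrix (Fin n) (Fin n) F)) i j =
      (if (i : ℕ) = (j : ℕ) + k + l then (1:F) else 0)
      + (if (i : ℕ) + n = (j : ℕ) + k + l + 1 ∧ n ≤ (j : ℕ) + l then β else 0)
      + (if (i : ℕ) + n = (j : ℕ) + k + l + 1 ∧ (j : ℕ) + l + 1 ≤ n ∧ 1 ≤ (i : ℕ) then α else 0)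
      + (if (i : ℕ) + 2*n = (j : ℕ) + k + l + 2 ∧ 1 ≤ (i : ℕ) then α * β else 0) := by
  have hi := i.isLt; have hj := j.isLt
  rw [Matrix.mul_apply]
  have step : ∀ m : Fin n,
      Amat α k i m * Amat β l m j
        = (if ((m : ℕ) + 0 = (j : ℕ) + l ∧ (i : ℕ) = (j : ℕ) + k + l) then (1:F) else 0)
        + (if ((m : ℕ) + n = (j : ℕ) + l + 1 ∧
              ((i : ℕ) + n = (j : ℕ) + k + l + 1 ∧ n ≤ (j : ℕ) + l)) then β else 0)
        + (if ((m : ℕ) + 0 = (j : ℕ) + l ∧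
              ((i : ℕ) + n = (j : ℕ) + k + l + 1 ∧ (j : ℕ) + l + 1 ≤ n ∧ 1 ≤ (i : ℕ))) then α else 0)
        + (if ((m : ℕ) + n = (j : ℕ) + l + 1 ∧
              ((i : ℕ) + 2*n = (j : ℕ) + k + l + 2 ∧ 1 ≤ (i : ℕ))) then α * β else 0) := by
    intro m
    have hm := m.isLt
    simp only [Amat, Matrix.of_apply]
    rw [add_mul, mul_add, mul_add]
    have e1 : (if (i : ℕ) = (m : ℕ) + k then (1:F) else 0) *
        (if (m : ℕ) = (j : ℕ) + l then (1:F) else 0)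
        = (if ((m : ℕ) + 0 = (j : ℕ) + l ∧ (i : ℕ) = (j : ℕ) + k + l) then (1:F) else 0) := by
      split_ifs <;> first | ring1 | (exfalso; omega)
    have e2 : (if (i : ℕ) = (m : ℕ) + k then (1:F) else 0) *
        (β * (if (m : ℕ) + n = (j : ℕ) + l + 1 ∧ 1 ≤ (m : ℕ) then (1:F) else 0))
        = (if ((m : ℕ) + n = (j : ℕ) + l + 1 ∧
              ((i : ℕ) + n = (j : ℕ) + k + l + 1 ∧ n ≤ (j : ℕ) + l)) then β else 0) := by
      split_ifs <;> first | ring1 | (exfalso; omega)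
    have e3 : (α * (if (i : ℕ) + n = (m : ℕ) + k + 1 ∧ 1 ≤ (i : ℕ) then (1:F) else 0)) *
        (if (m : ℕ) = (j : ℕ) + l then (1:F) else 0)
        = (if ((m : ℕ) + 0 = (j : ℕ) + l ∧
              ((i : ℕ) + n = (j : ℕ) + k + l + 1 ∧ (j : ℕ) + l + 1 ≤ n ∧ 1 ≤ (i : ℕ))) then α else 0) := by
      split_ifs <;> first | ring1 | (exfalso; omega)
    have e4 : (α * (if (i : ℕ) + n = (m : ℕ) + k + 1 ∧ 1 ≤ (i : ℕ) then (1:F) else 0)) *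
        (β * (if (m : ℕ) + n = (j : ℕ) + l + 1 ∧ 1 ≤ (m : ℕ) then (1:F) else 0))
        = (if ((m : ℕ) + n = (j : ℕ) + l + 1 ∧
              ((i : ℕ) + 2*n = (j : ℕ) + k + l + 2 ∧ 1 ≤ (i : ℕ))) then α * β else 0) := by
      split_ifs <;> first | ring1 | (exfalso; omega)
    rw [e1, e2, e3, e4]; ring
  rw [Finset.sum_congr rfl (fun m _ => step m), Finset.sum_add_distrib,
    Finset.sum_add_distrib, Finset.sum_add_distrib, sum_pin, sum_pin, sum_pin, sum_pin]
  congr 1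
  · congr 1
    · congr 1
      · split_ifs <;> first | rfl | (exfalso; omega)
      · split_ifs <;> first | rfl | (exfalso; omega)
    · split_ifs <;> first | rfl | (exfalso; omega)
  · split_ifs <;> first | rfl | (exfalso; omega)

def Wmat (α : F) : Matrix (Fin n) (Fin n) F :=
  Matrix.of fun i j =>
    (if (i : ℕ) = n - 1 ∧ (j : ℕ) = 0 then (1:F) else 0)
      - α * (if (i : ℕ) = 0 ∧ (j : ℕ) = 0 then 1 else 0)

def Zmat : Matrix (Fin n) (Fin n) F :=
  Matrix.diagonal (fun i => if (i : ℕ) = 1 then 1 else 0)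

lemma sum_pinN (d t : ℕ) (f : ℕ → F) :
    (∑ k ∈ Finset.range n, if k + d = t then f k else 0)
      = if (d ≤ t ∧ t < n + d) then f (t - d) else 0 := by
  by_cases h : d ≤ t ∧ t < n + d
  · rw [if_pos h, Finset.sum_eq_single_of_mem (t - d) (Finset.mem_range.mpr (by omega))]
    · rw [if_pos (by omega)]
    · intro b _ hb; rw [if_neg (by omega)]
  · rw [if_neg h]
    refine Finset.sum_eq_zero fun k hk => ?_
    have := Finset.mem_range.mp hk
    rw [if_neg (by omega)]

lemma mq_entry (α : F) (q : ℕ → F) (i j : Fin n) :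
    Mq α q i j =
      (if (j : ℕ) ≤ (i : ℕ) then q ((i : ℕ) - (j : ℕ)) else 0)
        + α * (if 1 ≤ (i : ℕ) ∧ (i : ℕ) ≤ (j : ℕ) then q ((i : ℕ) + n - 1 - (j : ℕ)) else 0) := by
  have hi := i.isLt; have hj := j.isLt
  rw [Mq, Matrix.sum_apply]
  simp only [Matrix.smul_apply, Amat, Matrix.of_apply, smul_eq_mul, mul_add]
  rw [Finset.sum_add_distrib]
  congr 1
  · have step : ∀ k ∈ Finset.range n,
        q k * (if (i : ℕ) = (j : ℕ) + k then (1:F) else 0)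
          = if k + (j : ℕ) = (i : ℕ) then q k else 0 := by
      intro k _
      split_ifs <;> first | ring1 | (exfalso; omega)
    rw [Finset.sum_congr rfl step, sum_pinN]
    split_ifs <;> first | rfl | (exfalso; omega) | (congr 1; omega)
  · have step : ∀ k ∈ Finset.range n,
        q k * (α * (if (i : ℕ) + n = (j : ℕ) + k + 1 ∧ 1 ≤ (i : ℕ) then (1:F) else 0))
          = α * (if 1 ≤ (i : ℕ) then (if k + ((j : ℕ) + 1) = (i : ℕ) + n then q k else 0) else 0) := by
      intro k _
      split_ifs <;> first | ring1 | (exfalso; omega)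
    rw [Finset.sum_congr rfl step, ← Finset.mul_sum]
    congr 1
    by_cases h1 : 1 ≤ (i : ℕ)
    · simp only [if_pos h1]
      rw [sum_pinN]
      split_ifs <;> first | rfl | (exfalso; omega) | (congr 1; omega)
    · simp only [if_neg h1]
      rw [Finset.sum_const_zero]
      rw [if_neg (by omega)]

set_option maxHeartbeats 1600000 in
lemma amat_comm (hn : 3 ≤ n) (α : F) {k l : ℕ} (hk : k < n) (hl : l < n) :
    Amat (n := n) α k * Amat α l = Amat α l * Amat α k := by
  ext i j
  have hi := i.isLt; have hj := j.isLt
  rw [prod_entry hn α α k l hk hl, prod_entry hn α α l k hl hk]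
  split_ifs <;> first | (exfalso; omega) | ring1

lemma mq_comm (hn : 3 ≤ n) (α : F) (q : ℕ → F) :
    Mq (n := n) α q * Amat α 1 = Amat α 1 * Mq α q := by
  rw [Mq, Finset.sum_mul, Finset.mul_sum]
  refine Finset.sum_congr rfl fun k hk => ?_
  rw [smul_mul_assoc, mul_smul_comm, amat_comm hn α (Finset.mem_range.mp hk) (by omega)]

lemma col_X (hn : 3 ≤ n) (α : F) (M : Matrix (Fin n) (Fin n) F) {jj : ℕ}
    (hjj : jj + 1 < n) (h2 : jj < n) (i : Fin n) :
    (M * Amat α 1 : Matrix (Fin n) (Fin n) F) i ⟨jj, h2⟩ = M i ⟨jj + 1, hjj⟩ := by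
  rw [Matrix.mul_apply]
  rw [Finset.sum_eq_single_of_mem (⟨jj+1, hjj⟩ : Fin n) (Finset.mem_univ _)]
  · have h1 : Amat (n := n) α 1 ⟨jj+1, hjj⟩ ⟨jj, h2⟩ = 1 := by
      simp only [Amat, Matrix.of_apply, Fin.val_mk]
      split_ifs <;> first | ring1 | (exfalso; omega)
    rw [h1, mul_one]
  · intro b _ hb
    have hbv : (b : ℕ) ≠ jj + 1 := fun hh => hb (Fin.ext (by simp only [Fin.val_mk]; omega))
    have hblt := b.isLt
    have hz : Amat (n := n) α 1 b ⟨jj, h2⟩ = 0 := by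
      simp only [Amat, Matrix.of_apply, Fin.val_mk]
      split_ifs <;> first | ring1 | (exfalso; omega)
    rw [hz, mul_zero]

lemma centralizer (hn : 3 ≤ n) (α : F) (M : Matrix (Fin n) (Fin n) F)
    (hM : M * Amat α 1 = Amat α 1 * M) : ∃ q : ℕ → F, M = Mq α q := by
  have hn0 : 0 < n := by omega
  refine ⟨fun k => if h : k < n then M ⟨k, h⟩ ⟨0, hn0⟩ else 0, ?_⟩
  set q : ℕ → F := fun k => if h : k < n then M ⟨k, h⟩ ⟨0, hn0⟩ else 0 with hqdef
  have key : ∀ jj (hjj : jj < n) (i : Fin n), M i ⟨jj, hjj⟩ = Mq α q i ⟨jj, hjj⟩ := by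
    intro jj
    induction jj with
    | zero =>
      intro hjj i
      have hi := i.isLt
      rw [mq_entry]
      simp only [Fin.val_mk]
      rw [if_pos (Nat.zero_le _), if_neg (by omega), mul_zero, add_zero, Nat.sub_zero]
      simp only [hqdef, dif_pos hi]
    | succ t ih =>
      intro hjj i
      have ht : t < n := by omega
      have e1 : M i ⟨t+1, hjj⟩ = (M * Amat α 1 : Matrix (Fin n) (Fin n) F) i ⟨t, ht⟩ :=
        (col_X hn α M hjj ht i).symm
      rw [e1, hM, Matrix.mul_apply]
      have e2 : ∀ m : Fin n, Amat (n:=n) α 1 i m * M m ⟨t, ht⟩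
          = Amat (n:=n) α 1 i m * Mq α q m ⟨t, ht⟩ := by
        intro m; rw [ih ht m]
      rw [Finset.sum_congr rfl (fun m _ => e2 m), ← Matrix.mul_apply, ← mq_comm hn α q,
        col_X hn α _ hjj ht i]
  ext i j
  have := key j.val j.isLt i
  simpa only [Fin.eta] using this

lemma mq_scalar (hn : 3 ≤ n) (α : F) (q : ℕ → F)
    (h : ∀ k, 1 ≤ k → k < n → q k = 0) : Mq (n := n) α q = q 0 • 1 := by
  ext i j
  have hi := i.isLt; have hj := j.isLt
  by_cases hij : i = j
  · subst hij
    rw [mq_entry, Matrix.smul_apply, Matrix.one_apply_eq, smul_eq_mul, mul_one]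
    rw [if_pos le_rfl, Nat.sub_self]
    by_cases h1 : 1 ≤ (i:ℕ)
    · rw [if_pos ⟨h1, le_rfl⟩, h ((i:ℕ) + n - 1 - (i:ℕ)) (by omega) (by omega)]
      ring
    · rw [if_neg (fun hc => h1 hc.1)]
      ring
  · have hvij : (i:ℕ) ≠ (j:ℕ) := fun hh => hij (Fin.ext hh)
    rw [mq_entry, Matrix.smul_apply, Matrix.one_apply_ne hij, smul_eq_mul, mul_zero]
    rcases Nat.lt_or_ge (j:ℕ) (i:ℕ) with hlt | hge
    · rw [if_pos (by omega), h _ (by omega) (by omega), if_neg (by omega)]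
      ring
    · rw [if_neg (by omega)]
      by_cases h1 : 1 ≤ (i:ℕ) ∧ (i:ℕ) ≤ (j:ℕ)
      · rw [if_pos h1, h _ (by omega) (by omega)]; ring
      · rw [if_neg h1]; ring

lemma mul_entry_expand (α β : F) (q p : ℕ → F) (i j : Fin n) :
    (Mq α q * Mq β p : Matrix (Fin n) (Fin n) F) i j
      = ∑ k ∈ Finset.range n, ∑ l ∈ Finset.range n,
          q k * p l * ((Amat α k * Amat β l : Matrix (Fin n) (Fin n) F) i j) := by
  rw [Mq, Mq, Finset.sum_mul, Matrix.sum_apply]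
  refine Finset.sum_congr rfl fun k _ => ?_
  rw [Finset.mul_sum, Matrix.sum_apply]
  refine Finset.sum_congr rfl fun l _ => ?_
  rw [smul_mul_assoc, mul_smul_comm, Matrix.smul_apply, Matrix.smul_apply, smul_eq_mul, smul_eq_mul]
  ring

lemma sum_collapse (q p : ℕ → F) {r s : ℕ}
    (hrn : r < n) (hsn : s < n)
    (hrmin : ∀ k, 1 ≤ k → k < r → q k = 0) (hsmin : ∀ k, 1 ≤ k → k < s → p k = 0)
    (f : ℕ → ℕ → F)
    (hEzero : ∀ k l, k < n → l < n → (k = 0 ∨ r ≤ k) → (l = 0 ∨ s ≤ l) →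
      ¬(k = r ∧ l = s) → f k l = 0) :
    ∑ k ∈ Finset.range n, ∑ l ∈ Finset.range n, q k * p l * f k l
      = q r * p s * f r s := by
  have supp : ∀ (g : ℕ → F) (m : ℕ), (∀ k, 1 ≤ k → k < m → g k = 0) → ∀ k, g k ≠ 0 → (k = 0 ∨ m ≤ k) := by
    intro g m hmin k hk
    rcases Nat.eq_zero_or_pos k with h0 | h0
    · exact Or.inl h0
    rcases Nat.lt_or_ge k m with h1 | h1
    · exact absurd (hmin k h0 h1) hk
    · exact Or.inr h1
  have innerzero : ∀ l ∈ Finset.range n, l ≠ s → q r * p l * f r l = 0 := by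
    intro l hl hls
    by_cases hpl : p l = 0
    · rw [hpl]; ring
    rw [hEzero r l hrn (Finset.mem_range.mp hl) (Or.inr le_rfl) (supp p s hsmin l hpl)
      (fun hc => hls hc.2), mul_zero]
  have outerzero : ∀ k ∈ Finset.range n, k ≠ r →
      (∑ l ∈ Finset.range n, q k * p l * f k l) = 0 := by
    intro k hk hkr
    refine Finset.sum_eq_zero fun l hl => ?_
    by_cases hqk : q k = 0
    · rw [hqk]; ring
    by_cases hpl : p l = 0
    · rw [hpl]; ring
    rw [hEzero k l (Finset.mem_range.mp hk) (Finset.mem_range.mp hl) (supp q r hrmin k hqk)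
      (supp p s hsmin l hpl) (fun hc => hkr hc.1), mul_zero]
  rw [Finset.sum_eq_single_of_mem r (Finset.mem_range.mpr hrn) outerzero,
    Finset.sum_eq_single_of_mem s (Finset.mem_range.mpr hsn) innerzero]

set_option maxHeartbeats 3200000 in
lemma noCommAux (hn : 3 ≤ n) {α β : F} (hab : α ≠ β) (q p : ℕ → F)
    (r s : ℕ) (hr1 : 1 ≤ r) (hrn : r < n) (hqr : q r ≠ 0)
    (hrmin : ∀ k, 1 ≤ k → k < r → q k = 0)
    (hs1 : 1 ≤ s) (hsn : s < n) (hps : p s ≠ 0)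
    (hsmin : ∀ k, 1 ≤ k → k < s → p k = 0)
    (hcomm : Mq (n := n) α q * Mq β p = Mq β p * Mq α q) : False := by
  have main : ∀ (i0 j0 : Fin n),
      ∑ k ∈ Finset.range n, ∑ l ∈ Finset.range n, q k * p l *
        ((Amat α k * Amat β l : Matrix (Fin n) (Fin n) F) i0 j0
          - (Amat β l * Amat α k : Matrix (Fin n) (Fin n) F) i0 j0) = 0 := by
    intro i0 j0
    have e1 := mul_entry_expand (n := n) α β q p i0 j0
    have e2 := mul_entry_expand (n := n) β α p q i0 j0
    have hswap : ∑ k ∈ Finset.range n, ∑ l ∈ Finset.range n,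
        q k * p l * ((Amat β l * Amat α k : Matrix (Fin n) (Fin n) F) i0 j0)
        = ∑ l ∈ Finset.range n, ∑ k ∈ Finset.range n,
            p l * q k * ((Amat β l * Amat α k : Matrix (Fin n) (Fin n) F) i0 j0) := by
      rw [Finset.sum_comm]
      exact Finset.sum_congr rfl fun l _ => Finset.sum_congr rfl fun k _ => by ring
    have hsplit : ∑ k ∈ Finset.range n, ∑ l ∈ Finset.range n, q k * p l *
        ((Amat α k * Amat β l : Matrix (Fin n) (Fin n) F) i0 j0
          - (Amat β l * Amat α k : Matrix (Fin n) (Fin n) F) i0 j0)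
        = (∑ k ∈ Finset.range n, ∑ l ∈ Finset.range n, q k * p l *
            ((Amat α k * Amat β l : Matrix (Fin n) (Fin n) F) i0 j0))
          - ∑ k ∈ Finset.range n, ∑ l ∈ Finset.range n, q k * p l *
            ((Amat β l * Amat α k : Matrix (Fin n) (Fin n) F) i0 j0) := by
      rw [← Finset.sum_sub_distrib]
      refine Finset.sum_congr rfl fun k _ => ?_
      rw [← Finset.sum_sub_distrib]
      exact Finset.sum_congr rfl fun l _ => by ring
    rw [hsplit, hswap, ← e1, ← e2, hcomm]
    ring
  rcases Nat.lt_or_ge (r + s) n with hcase | hcase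
  · have hj0 : n - 1 < n := by omega
    have h1 := main ⟨r + s, hcase⟩ ⟨n - 1, hj0⟩
    have hvi : ((⟨r + s, hcase⟩ : Fin n) : ℕ) = r + s := rfl
    have hvj : ((⟨n - 1, hj0⟩ : Fin n) : ℕ) = n - 1 := rfl
    rw [sum_collapse q p hrn hsn hrmin hsmin _ ?_] at h1
    · have hdiag : ((Amat α r * Amat β s : Matrix (Fin n) (Fin n) F) ⟨r + s, hcase⟩ ⟨n - 1, hj0⟩
          - (Amat β s * Amat α r : Matrix (Fin n) (Fin n) F) ⟨r + s, hcase⟩ ⟨n - 1, hj0⟩) = β - α := by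
        rw [prod_entry hn α β r s hrn hsn, prod_entry hn β α s r hsn hrn]
        split_ifs <;> first | (exfalso; omega) | ring1
      rw [hdiag] at h1
      exact (mul_ne_zero (mul_ne_zero hqr hps) (sub_ne_zero_of_ne (Ne.symm hab))) h1
    · intro k l hk hl hk0 hl0 hne
      rw [prod_entry hn α β k l hk hl, prod_entry hn β α l k hl hk]
      split_ifs <;> first | (exfalso; omega) | ring1
  · have hi0 : r + s + 1 - n < n := by omega
    have hj0 : 0 < n := by omega
    have h1 := main ⟨r + s + 1 - n, hi0⟩ ⟨0, hj0⟩
    have hvi : ((⟨r + s + 1 - n, hi0⟩ : Fin n) : ℕ) = r + s + 1 - n := rfl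
    have hvj : ((⟨0, hj0⟩ : Fin n) : ℕ) = 0 := rfl
    rw [sum_collapse q p hrn hsn hrmin hsmin _ ?_] at h1
    · have hdiag : ((Amat α r * Amat β s : Matrix (Fin n) (Fin n) F) ⟨r + s + 1 - n, hi0⟩ ⟨0, hj0⟩
          - (Amat β s * Amat α r : Matrix (Fin n) (Fin n) F) ⟨r + s + 1 - n, hi0⟩ ⟨0, hj0⟩) = α - β := by
        rw [prod_entry hn α β r s hrn hsn, prod_entry hn β α s r hsn hrn]
        split_ifs <;> first | (exfalso; omega) | ring1
      rw [hdiag] at h1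
      exact (mul_ne_zero (mul_ne_zero hqr hps) (sub_ne_zero_of_ne hab)) h1
    · intro k l hk hl hk0 hl0 hne
      rw [prod_entry hn α β k l hk hl, prod_entry hn β α l k hl hk]
      split_ifs <;> first | (exfalso; omega) | ring1

lemma noComm (hn : 3 ≤ n) {α β : F} (hab : α ≠ β)
    {C D : Matrix (Fin n) (Fin n) F}
    (hC : C * Amat α 1 = Amat α 1 * C) (hD : D * Amat β 1 = Amat β 1 * D)
    (hCs : ¬ IsScalarM C) (hDs : ¬ IsScalarM D) (hCD : C * D = D * C) : False := by
  classical
  obtain ⟨q, rfl⟩ := centralizer hn α C hC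
  obtain ⟨p, rfl⟩ := centralizer hn β D hD
  have hexq : ∃ k, 1 ≤ k ∧ k < n ∧ q k ≠ 0 := by
    by_contra hno
    push_neg at hno
    exact hCs ⟨q 0, mq_scalar hn α q (fun k h1 h2 => hno k h1 h2)⟩
  have hexp : ∃ k, 1 ≤ k ∧ k < n ∧ p k ≠ 0 := by
    by_contra hno
    push_neg at hno
    exact hDs ⟨p 0, mq_scalar hn β p (fun k h1 h2 => hno k h1 h2)⟩
  have hq := Nat.find_spec hexq
  have hp := Nat.find_spec hexp
  refine noCommAux hn hab q p (Nat.find hexq) (Nat.find hexp) hq.1 hq.2.1 hq.2.2 ?_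
    hp.1 hp.2.1 hp.2.2 ?_ hCD
  · intro k h1 h2
    by_contra hk
    exact Nat.find_min hexq h2 ⟨h1, by have := hq.2.1; omega, hk⟩
  · intro k h1 h2
    by_contra hk
    exact Nat.find_min hexp h2 ⟨h1, by have := hp.2.1; omega, hk⟩

lemma XW_zero (hn : 3 ≤ n) (α : F) : (Amat α 1 * Wmat α : Matrix (Fin n) (Fin n) F) = 0 := by
  ext i j
  have hi := i.isLt; have hj := j.isLt
  rw [Matrix.mul_apply, Matrix.zero_apply]
  have step : ∀ m : Fin n, Amat (n := n) α 1 i m * Wmat α m j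
      = (if ((m:ℕ) + 1 = n ∧ ((j:ℕ) = 0 ∧ (i:ℕ) = 1)) then α else 0)
        - (if ((m:ℕ) + 0 = 0 ∧ ((j:ℕ) = 0 ∧ (i:ℕ) = 1)) then α else 0) := by
    intro m
    have hm := m.isLt
    simp only [Amat, Wmat, Matrix.of_apply]
    split_ifs <;> first | ring1 | (exfalso; omega)
  rw [Finset.sum_congr rfl (fun m _ => step m), Finset.sum_sub_distrib, sum_pin, sum_pin]
  split_ifs <;> first | ring1 | (exfalso; omega)

lemma WX_zero (hn : 3 ≤ n) (α : F) : (Wmat α * Amat α 1 : Matrix (Fin n) (Fin n) F) = 0 := by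
  ext i j
  have hi := i.isLt; have hj := j.isLt
  rw [Matrix.mul_apply, Matrix.zero_apply]
  refine Finset.sum_eq_zero fun m _ => ?_
  have hm := m.isLt
  simp only [Amat, Wmat, Matrix.of_apply]
  split_ifs <;> first | ring1 | (exfalso; omega)

lemma WZ_zero (hn : 3 ≤ n) (α : F) : (Wmat α * Zmat : Matrix (Fin n) (Fin n) F) = 0 := by
  ext i j
  have hi := i.isLt; have hj := j.isLt
  rw [Zmat, Matrix.mul_diagonal, Matrix.zero_apply]
  simp only [Wmat, Matrix.of_apply]
  split_ifs <;> first | ring1 | (exfalso; omega)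

lemma ZW_zero (hn : 3 ≤ n) (α : F) : (Zmat * Wmat α : Matrix (Fin n) (Fin n) F) = 0 := by
  ext i j
  have hi := i.isLt; have hj := j.isLt
  rw [Zmat, Matrix.diagonal_mul, Matrix.zero_apply]
  simp only [Wmat, Matrix.of_apply]
  split_ifs <;> first | ring1 | (exfalso; omega)

lemma ZX_ne_XZ (hn : 3 ≤ n) (α : F) :
    (Zmat * Amat α 1 : Matrix (Fin n) (Fin n) F) ≠ Amat α 1 * Zmat := by
  intro h
  have h2 := (Matrix.ext_iff.mpr h) ⟨1, by omega⟩ ⟨0, by omega⟩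
  rw [Zmat, Matrix.diagonal_mul, Matrix.mul_diagonal] at h2
  simp only [Amat, Matrix.of_apply, Fin.val_mk] at h2
  split_ifs at h2 <;> first | omega | simp_all

lemma X_ne_W (hn : 3 ≤ n) (α β : F) :
    (Amat α 1 : Matrix (Fin n) (Fin n) F) ≠ Wmat β := by
  intro h
  have h2 := (Matrix.ext_iff.mpr h) ⟨1, by omega⟩ ⟨0, by omega⟩
  simp only [Amat, Wmat, Matrix.of_apply, Fin.val_mk] at h2
  split_ifs at h2 <;> first | omega | simp_all

lemma X_ne_Z (hn : 3 ≤ n) (α : F) :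
    (Amat α 1 : Matrix (Fin n) (Fin n) F) ≠ Zmat := by
  intro h
  have h2 := (Matrix.ext_iff.mpr h) ⟨1, by omega⟩ ⟨0, by omega⟩
  rw [Zmat, Matrix.diagonal_apply_ne _ (by simp [Fin.ext_iff])] at h2
  simp only [Amat, Matrix.of_apply, Fin.val_mk] at h2
  split_ifs at h2 <;> first | omega | simp_all

lemma W_ne_Z (hn : 3 ≤ n) (α : F) :
    (Wmat α : Matrix (Fin n) (Fin n) F) ≠ Zmat := by
  intro h
  have h2 := (Matrix.ext_iff.mpr h) ⟨n - 1, by omega⟩ ⟨0, by omega⟩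
  rw [Zmat, Matrix.diagonal_apply_ne _ (by simp [Fin.ext_iff]; omega)] at h2
  simp only [Wmat, Matrix.of_apply, Fin.val_mk] at h2
  split_ifs at h2 <;> first | omega | simp_all

lemma X_inj (hn : 3 ≤ n) {α β : F}
    (h : (Amat α 1 : Matrix (Fin n) (Fin n) F) = Amat β 1) : α = β := by
  have h2 := (Matrix.ext_iff.mpr h) ⟨1, by omega⟩ ⟨n - 1, by omega⟩
  simp only [Amat, Matrix.of_apply, Fin.val_mk] at h2
  split_ifs at h2 <;> first | omega | (simpa using h2)

lemma X_not_scalar (hn : 3 ≤ n) (α : F) : ¬ IsScalarM (Amat (n := n) α 1) := by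
  rintro ⟨c, hc⟩
  have hne : (⟨1, by omega⟩ : Fin n) ≠ ⟨0, by omega⟩ := by
    simp [Fin.ext_iff]
  have h2 := (Matrix.ext_iff.mpr hc) ⟨1, by omega⟩ ⟨0, by omega⟩
  rw [Matrix.smul_apply, Matrix.one_apply_ne hne, smul_eq_mul, mul_zero] at h2
  simp only [Amat, Matrix.of_apply, Fin.val_mk] at h2
  split_ifs at h2 <;> first | omega | simp_all

lemma W_not_scalar (hn : 3 ≤ n) (α : F) : ¬ IsScalarM (Wmat (n := n) α) := by
  rintro ⟨c, hc⟩
  have hne : (⟨n - 1, by omega⟩ : Fin n) ≠ ⟨0, by omega⟩ := by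
    simp [Fin.ext_iff]; omega
  have h2 := (Matrix.ext_iff.mpr hc) ⟨n - 1, by omega⟩ ⟨0, by omega⟩
  rw [Matrix.smul_apply, Matrix.one_apply_ne hne, smul_eq_mul, mul_zero] at h2
  simp only [Wmat, Matrix.of_apply, Fin.val_mk] at h2
  split_ifs at h2 <;> first | omega | simp_all

lemma Z11 (h : 1 < n) : (Zmat : Matrix (Fin n) (Fin n) F) ⟨1, h⟩ ⟨1, h⟩ = 1 := by
  rw [Zmat, Matrix.diagonal_apply_eq]; simp

lemma Z00 (h : 0 < n) : (Zmat : Matrix (Fin n) (Fin n) F) ⟨0, h⟩ ⟨0, h⟩ = 0 := by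
  rw [Zmat, Matrix.diagonal_apply_eq]; simp

lemma Z_not_scalar (hn : 3 ≤ n) : ¬ IsScalarM (Zmat : Matrix (Fin n) (Fin n) F) := by
  rintro ⟨c, hc⟩
  have h1 := (Matrix.ext_iff.mpr hc) ⟨1, by omega⟩ ⟨1, by omega⟩
  have h2 := (Matrix.ext_iff.mpr hc) ⟨0, by omega⟩ ⟨0, by omega⟩
  rw [Matrix.smul_apply, Matrix.one_apply_eq, smul_eq_mul, mul_one, Z11 (by omega)] at h1
  rw [Matrix.smul_apply, Matrix.one_apply_eq, smul_eq_mul, mul_one, Z00 (by omega)] at h2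
  exact one_ne_zero (h1.trans h2.symm)

lemma Z_rank (hn : 3 ≤ n) : (Zmat : Matrix (Fin n) (Fin n) F).rank = 1 := by
  classical
  rw [Zmat, Matrix.rank_diagonal]
  rw [Fintype.card_eq_one_iff]
  refine ⟨⟨⟨1, by omega⟩, by simp⟩, ?_⟩
  rintro ⟨y, hy⟩
  refine Subtype.ext (Fin.ext ?_)
  simp only [Fin.val_mk]
  by_contra hne
  exact hy (if_neg hne)

/-- Any walk between two of the distinguished matrices has length at least 4. -/
lemma no_short_walk_XX (hn : 3 ≤ n) {α β : F} (hab : α ≠ β)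
    {u v : {A : Matrix (Fin n) (Fin n) F // ¬ IsScalarM A}}
    (hu : u.1 = Amat α 1) (hv : v.1 = Amat β 1)
    (w : (CommGraph F n).Walk u v) : 4 ≤ w.length := by
  by_contra hlen
  push_neg at hlen
  cases w with
  | nil => exact hab (X_inj hn (hu ▸ hv ▸ rfl))
  | cons h1 p1 =>
    rename_i c1
    cases p1 with
    | nil =>
      have hcd : (Amat α 1 : Matrix (Fin n) (Fin n) F) * Amat β 1 = Amat β 1 * Amat α 1 := by
        have hx := h1.2; rw [hu, hv] at hx; exact hx
      exact noComm hn hab rfl rfl (X_not_scalar hn α) (X_not_scalar hn β) hcd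
    | cons h2 p2 =>
      rename_i c2
      cases p2 with
      | nil =>
        have hC : c1.1 * Amat α 1 = Amat α 1 * c1.1 := by
          have hx := h1.2; rw [hu] at hx; exact hx.symm
        have hD : c1.1 * Amat β 1 = Amat β 1 * c1.1 := by
          have hx := h2.2; rw [hv] at hx; exact hx
        exact noComm hn hab hC hD c1.2 c1.2 rfl
      | cons h3 p3 =>
        rename_i c3
        cases p3 with
        | nil =>
          have hC : c1.1 * Amat α 1 = Amat α 1 * c1.1 := by
            have hx := h1.2; rw [hu] at hx; exact hx.symm
          have hD : c2.1 * Amat β 1 = Amat β 1 * c2.1 := by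
            have hx := h3.2; rw [hv] at hx; exact hx
          exact noComm hn hab hC hD c1.2 c2.2 h2.2
        | cons h4 p4 =>
          simp only [SimpleGraph.Walk.length_cons] at hlen
          omega

lemma no_short_walk_XZ (hn : 3 ≤ n) (α : F)
    {u v : {A : Matrix (Fin n) (Fin n) F // ¬ IsScalarM A}}
    (hu : u.1 = Amat α 1) (hv : v.1 = Zmat)
    (w : (CommGraph F n).Walk u v) : 2 ≤ w.length := by
  by_contra hlen
  push_neg at hlen
  cases w with
  | nil => exact X_ne_Z hn α (hu ▸ hv ▸ rfl)
  | cons h1 p1 =>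
    cases p1 with
    | nil => exact ZX_ne_XZ hn α (by have hx := h1.2; rw [hu, hv] at hx; exact hx.symm)
    | cons h2 p2 =>
      simp only [SimpleGraph.Walk.length_cons] at hlen
      omega

end Stmt12Aux

open Stmt12Aux in
theorem stmt12 (F : Type*) [Field F] [IsAlgClosed F] (n : ℕ) (hn : 3 ≤ n) :
    ∃ (ι : Type) (_ : Infinite ι)
      (X : ι → {A : Matrix (Fin n) (Fin n) F // ¬ IsScalarM A})
      (Z : {A : Matrix (Fin n) (Fin n) F // ¬ IsScalarM A}),
      Z.1.rank = 1 ∧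
      (∀ α β : ι, α ≠ β → (CommGraph F n).dist (X α) (X β) = 4) ∧
      (∀ α : ι, (CommGraph F n).dist (X α) Z = 2) := by
  classical
  let e : ℕ ↪ F := Infinite.natEmbedding F
  let vX : ℕ → {A : Matrix (Fin n) (Fin n) F // ¬ IsScalarM A} :=
    fun m => ⟨Amat (e m) 1, X_not_scalar hn (e m)⟩
  let vW : ℕ → {A : Matrix (Fin n) (Fin n) F // ¬ IsScalarM A} :=
    fun m => ⟨Wmat (e m), W_not_scalar hn (e m)⟩
  let vZ : {A : Matrix (Fin n) (Fin n) F // ¬ IsScalarM A} := ⟨Zmat, Z_not_scalar hn⟩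
  have adjXW : ∀ m, (CommGraph F n).Adj (vX m) (vW m) := by
    intro m
    refine ⟨fun hc => X_ne_W hn (e m) (e m) (congrArg Subtype.val hc), ?_⟩
    show Amat (e m) 1 * Wmat (e m) = Wmat (e m) * Amat (e m) 1
    rw [XW_zero hn, WX_zero hn]
  have adjWZ : ∀ m, (CommGraph F n).Adj (vW m) vZ := by
    intro m
    refine ⟨fun hc => W_ne_Z hn (e m) (congrArg Subtype.val hc), ?_⟩
    show Wmat (e m) * Zmat = Zmat * Wmat (e m)
    rw [WZ_zero hn, ZW_zero hn]
  refine ⟨ℕ, inferInstance, vX, vZ, Z_rank hn, ?_, ?_⟩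
  · intro a b hab'
    have hne : e a ≠ e b := fun h => hab' (e.injective h)
    let w4 : (CommGraph F n).Walk (vX a) (vX b) :=
      .cons (adjXW a) (.cons (adjWZ a) (.cons ((adjWZ b).symm) (.cons ((adjXW b).symm) .nil)))
    have hlen : w4.length = 4 := rfl
    have hle : (CommGraph F n).dist (vX a) (vX b) ≤ 4 := hlen ▸ SimpleGraph.dist_le w4
    have hreach : (CommGraph F n).Reachable (vX a) (vX b) := ⟨w4⟩
    obtain ⟨p, hp⟩ := hreach.exists_walk_length_eq_dist
    have h4 := no_short_walk_XX hn hne rfl rfl p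
    omega
  · intro a
    let w2 : (CommGraph F n).Walk (vX a) vZ := .cons (adjXW a) (.cons (adjWZ a) .nil)
    have hlen : w2.length = 2 := rfl
    have hle : (CommGraph F n).dist (vX a) vZ ≤ 2 := hlen ▸ SimpleGraph.dist_le w2
    have hreach : (CommGraph F n).Reachable (vX a) vZ := ⟨w2⟩
    obtain ⟨p, hp⟩ := hreach.exists_walk_length_eq_dist
    have h2 := no_short_walk_XZ hn (e a) rfl rfl p
    omega
end

section
/- For n = 3 and an algebraically closed field F: for α ≠ β in F, the rank-one nilpotent matrices R_α = (0,1,α)ᵀ(0,α,−1) and R_β = (0,1,β)ᵀ(0,β,−1) do not commute, but both commute with E₁₁; hence d(R_α, R_β) = 2 in Γ(M₃(F)). -/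
open Matrix

theorem stmt13 (F : Type*) [Field F] [IsAlgClosed F] (α β : F) (hαβ : α ≠ β) :
    let Rα : Matrix (Fin 3) (Fin 3) F := vecMulVec ![0, 1, α] ![0, α, -1]
    let Rβ : Matrix (Fin 3) (Fin 3) F := vecMulVec ![0, 1, β] ![0, β, -1]
    let E : Matrix (Fin 3) (Fin 3) F := Matrix.single 0 0 1
    Rα * Rβ ≠ Rβ * Rα ∧ Rα * E = E * Rα ∧ Rβ * E = E * Rβ ∧
    ∀ (h₁ : ¬ IsScalarM Rα) (h₂ : ¬ IsScalarM Rβ),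
      (CommGraph F 3).dist ⟨Rα, h₁⟩ ⟨Rβ, h₂⟩ = 2 := by
  intro Rα Rβ E
  have hnc : Rα * Rβ ≠ Rβ * Rα := by
    intro h
    have h12 := congrFun (congrFun h 1) 2
    have h11 := congrFun (congrFun h 1) 1
    simp [Rα, Rβ, Matrix.mul_apply, Fin.sum_univ_three, vecMulVec_apply] at h12 h11
    apply hαβ
    have hsq : (α - β)^2 = 0 := by linear_combination h11 + β * h12
    have := sq_eq_zero_iff.mp hsq
    linear_combination this
  have hRαE : Rα * E = E * Rα := by
    ext i j
    fin_cases i <;> fin_cases j <;>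
      simp [Rα, E, Matrix.mul_apply, Fin.sum_univ_three, vecMulVec_apply,
        Matrix.single]
  have hRβE : Rβ * E = E * Rβ := by
    ext i j
    fin_cases i <;> fin_cases j <;>
      simp [Rβ, E, Matrix.mul_apply, Fin.sum_univ_three, vecMulVec_apply,
        Matrix.single]
  refine ⟨hnc, hRαE, hRβE, ?_⟩
  intro h₁ h₂
  have hE : ¬ IsScalarM E := by
    rintro ⟨c, hc⟩
    have h0 := congrFun (congrFun hc 0) 0
    have h1 := congrFun (congrFun hc 1) 1
    simp [E, Matrix.single, Matrix.one_apply] at h0 h1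
    exact one_ne_zero (h0.trans h1.symm)
  have hRαneE : Rα ≠ E := by
    intro h
    have := congrFun (congrFun h 0) 0
    simp [Rα, E, vecMulVec_apply, Matrix.single] at this
  have hRβneE : Rβ ≠ E := by
    intro h
    have := congrFun (congrFun h 0) 0
    simp [Rβ, E, vecMulVec_apply, Matrix.single] at this
  set u : {A : Matrix (Fin 3) (Fin 3) F // ¬ IsScalarM A} := ⟨Rα, h₁⟩
  set v : {A : Matrix (Fin 3) (Fin 3) F // ¬ IsScalarM A} := ⟨Rβ, h₂⟩
  set w : {A : Matrix (Fin 3) (Fin 3) F // ¬ IsScalarM A} := ⟨E, hE⟩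
  have hadj1 : (CommGraph F 3).Adj u w := ⟨by simp [u, w, Subtype.ext_iff]; exact hRαneE, hRαE⟩
  have hadj2 : (CommGraph F 3).Adj w v := ⟨by simp [v, w, Subtype.ext_iff]; exact fun h => hRβneE h.symm, hRβE.symm⟩
  have hle : (CommGraph F 3).dist u v ≤ 2 := by
    simpa using SimpleGraph.dist_le (SimpleGraph.Walk.cons hadj1 (SimpleGraph.Walk.cons hadj2 SimpleGraph.Walk.nil))
  have hne : u ≠ v := by
    intro h
    apply hnc
    have : Rα = Rβ := congrArg Subtype.val h
    rw [this]
  have hnadj : ¬ (CommGraph F 3).Adj u v := fun h => hnc h.2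
  have h0 : (CommGraph F 3).dist u v ≠ 0 := by
    intro h
    rcases SimpleGraph.dist_eq_zero_iff_eq_or_not_reachable.mp h with h' | h'
    · exact hne h'
    · exact h' ⟨.cons hadj1 (.cons hadj2 .nil)⟩
  have h1 : (CommGraph F 3).dist u v ≠ 1 := fun h =>
    hnadj (SimpleGraph.dist_eq_one_iff_adj.mp h)
  omega
end
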